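/- arXiv:1705.05262 — 10 statements merged into one kernel-verified Lean document; each statement's English description precedes it below -/
import Mathlib

section
/- Let ℋ be a complex Hilbert space and let L₊, L₋ be linear subspaces of ℋ. A linear subspace 𝒫 ⊆ L₊ × L₋ is positive for the signed form, i.e. ‖k₊‖² − ‖k₋‖² ≥ 0 for every (k₊, k₋) ∈ 𝒫, if and only if there exist a linear subspace D ⊆ L₊ and a linear map C : D → L₋ satisfying ‖Ck‖ ≤ ‖k‖ for all k ∈ D such that 𝒫 = {(k, Ck) : k ∈ D}, i.e. 𝒫 is the graph of a (partially defined) linear contraction from L₊ to L₋. -/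
open scoped ComplexInnerProductSpace ComplexOrder

/-- A subspace `S ⊆ Lp × Lm` is positive for the signed form
`‖k₊‖² - ‖k₋‖²` iff it is the graph of a (partially defined) linear contraction
`C : D → Lm` with `D ⊆ Lp`. -/
theorem stmt1 {H : Type*} [NormedAddCommGroup H] [InnerProductSpace ℂ H] [CompleteSpace H]
    (Lp Lm : Submodule ℂ H) (S : Submodule ℂ (Lp × Lm)) :
    (∀ x ∈ S, (0 : ℝ) ≤ ‖(x.1 : H)‖ ^ 2 - ‖(x.2 : H)‖ ^ 2) ↔
      ∃ (D : Submodule ℂ Lp) (C : D →ₗ[ℂ] Lm),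
        (∀ k : D, ‖C k‖ ≤ ‖(k : Lp)‖) ∧
          (S : Set (Lp × Lm)) = {p | ∃ k : D, p = ((k : Lp), C k)} := by
  constructor
  · intro hpos
    set p1 : S →ₗ[ℂ] Lp := (LinearMap.fst ℂ Lp Lm).comp S.subtype with hp1
    set p2 : S →ₗ[ℂ] Lm := (LinearMap.snd ℂ Lp Lm).comp S.subtype with hp2
    have key : ∀ x : S, ‖p2 x‖ ≤ ‖p1 x‖ := by
      intro x
      have h := hpos x x.2
      have h1 : ‖((x : Lp × Lm).2 : H)‖ ^ 2 ≤ ‖((x : Lp × Lm).1 : H)‖ ^ 2 := by linarith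
      exact (pow_le_pow_iff_left₀ (norm_nonneg _) (norm_nonneg _) two_ne_zero).mp h1
    have hinj : Function.Injective p1 := by
      rw [← LinearMap.ker_eq_bot]
      refine (Submodule.eq_bot_iff _).mpr fun x hx => ?_
      have h2 := key x
      rw [LinearMap.mem_ker] at hx
      rw [hx, norm_zero] at h2
      have h0 : p2 x = 0 := norm_le_zero_iff.mp h2
      have : (x : Lp × Lm) = 0 := Prod.ext hx h0
      exact Subtype.ext this
    let e : S ≃ₗ[ℂ] LinearMap.range p1 := LinearEquiv.ofInjective p1 hinj
    refine ⟨LinearMap.range p1, p2 ∘ₗ e.symm.toLinearMap, ?_, ?_⟩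
    · intro k
      have he : p1 (e.symm k) = (k : Lp) := by
        have := e.apply_symm_apply k
        exact congrArg Subtype.val this
      calc ‖(p2 ∘ₗ e.symm.toLinearMap) k‖ = ‖p2 (e.symm k)‖ := rfl
        _ ≤ ‖p1 (e.symm k)‖ := key _
        _ = ‖(k : Lp)‖ := by rw [he]
    · ext x
      simp only [SetLike.mem_coe, Set.mem_setOf_eq]
      constructor
      · intro hx
        refine ⟨e ⟨x, hx⟩, ?_⟩
        have h1 : ((e ⟨x, hx⟩ : LinearMap.range p1) : Lp) = p1 ⟨x, hx⟩ := rfl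
        have h2 : e.symm (e ⟨x, hx⟩) = ⟨x, hx⟩ := e.symm_apply_apply _
        have h3 : (p2 ∘ₗ e.symm.toLinearMap) (e ⟨x, hx⟩) = p2 ⟨x, hx⟩ := by
          simp [h2]
        rw [h1, h3]
        exact Prod.ext rfl rfl
      · rintro ⟨k, rfl⟩
        have he : p1 (e.symm k) = (k : Lp) := congrArg Subtype.val (e.apply_symm_apply k)
        have : ((e.symm k : S) : Lp × Lm) = ((k : Lp), (p2 ∘ₗ e.symm.toLinearMap) k) := by
          refine Prod.ext ?_ rfl
          exact he
        rw [← this]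
        exact (e.symm k).2
  · intro ⟨D, C, hC, hgraph⟩ x hx
    have : x ∈ (S : Set (Lp × Lm)) := hx
    rw [hgraph] at this
    obtain ⟨k, rfl⟩ := this
    have := hC k
    have h1 : ‖((C k : Lm) : H)‖ = ‖C k‖ := rfl
    have h2 : ‖((k : Lp) : H)‖ = ‖(k : Lp)‖ := rfl
    simp only [h1, h2]
    nlinarith [norm_nonneg (C k), norm_nonneg ((k : Lp))]
end

section
/- Let θ be a reflection on a complex Hilbert space ℋ and let P be the orthogonal projection onto {h ∈ ℋ : θh = h}, so θ = 2P − I. For a closed subspace ℋ₊ ⊆ ℋ the following are equivalent: (i) the real number ⟨h₊, θh₊⟩ is ≥ 0 for every h₊ ∈ ℋ₊ (O.S. positivity); (ii) there exists a linear map C from the range of P to the orthogonal complement (range P)⊥ with ‖Cu‖ ≤ ‖u‖ for all u ∈ range P, such that ℋ₊ ⊆ {u + Cu : u ∈ range P}, i.e. ℋ₊ is contained in the graph of a contraction from Pℋ to P⊥ℋ. -/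
open scoped ComplexInnerProductSpace ComplexOrder

/-- For a reflection `θ = 2P - 1` and a closed subspace `Hp`,
O.S. positivity `⟪h, θ h⟫ ≥ 0` on `Hp` holds iff `Hp` is contained in the graph of a
contraction `C : range P → (range P)ᗮ`. -/
theorem stmt2 {H : Type*} [NormedAddCommGroup H] [InnerProductSpace ℂ H] [CompleteSpace H]
    (θ P : H →L[ℂ] H)
    (hθ_sa : IsSelfAdjoint θ) (hθ_invol : θ ∘L θ = 1)
    (hP_sa : IsSelfAdjoint P) (hP_idem : P ∘L P = P)
    (hP_range : ∀ h : H, P h = h ↔ θ h = h)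
    (hθP : θ = 2 • P - 1)
    (Hp : Submodule ℂ H) (hHp_closed : IsClosed (Hp : Set H)) :
    (∀ h ∈ Hp, (0 : ℂ) ≤ ⟪h, θ h⟫) ↔
      ∃ C : (LinearMap.range (P : H →ₗ[ℂ] H)) →ₗ[ℂ] ((LinearMap.range (P : H →ₗ[ℂ] H))ᗮ),
        (∀ u : LinearMap.range (P : H →ₗ[ℂ] H), ‖C u‖ ≤ ‖u‖) ∧
          (Hp : Set H) ⊆ {h : H | ∃ u : LinearMap.range (P : H →ₗ[ℂ] H), h = (u : H) + (C u : H)} := by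
  have hsym : ∀ x y : H, ⟪P x, y⟫ = ⟪x, P y⟫ := fun x y => by
    have := ContinuousLinearMap.adjoint_inner_left P y x
    rwa [hP_sa.adjoint_eq] at this
  have hPP : ∀ x : H, P (P x) = P x := fun x => by
    have := congrArg (fun T : H →L[ℂ] H => T x) hP_idem
    simpa using this
  have hPerp : ∀ w x : H, ⟪P w, x - P x⟫ = 0 := fun w x => by
    rw [hsym]; simp [hPP]
  have hpyth : ∀ x : H, ‖x‖ ^ 2 = ‖P x‖ ^ 2 + ‖x - P x‖ ^ 2 := fun x => by
    have h0 := norm_add_sq_eq_norm_sq_add_norm_sq_of_inner_eq_zero (P x) (x - P x) (hPerp x x)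
    rw [show P x + (x - P x) = x by abel] at h0
    rw [pow_two, pow_two, pow_two]; exact h0
  have key : ∀ h : H, ((0 : ℂ) ≤ ⟪h, θ h⟫ ↔ ‖h - P h‖ ≤ ‖P h‖) := by
    intro h
    have h1 : ⟪h, θ h⟫ = ((‖P h‖ ^ 2 - ‖h - P h‖ ^ 2 : ℝ) : ℂ) := by
      have hip : ⟪h, P h⟫ = ((‖P h‖ ^ 2 : ℝ) : ℂ) := by
        rw [← hPP h, ← hsym, hPP, inner_self_eq_norm_sq_to_K]
        norm_cast
      rw [hθP]
      simp only [ContinuousLinearMap.sub_apply, ContinuousLinearMap.smul_apply,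
        ContinuousLinearMap.one_apply, inner_sub_right, two_smul, inner_add_right, hip,
        inner_self_eq_norm_sq_to_K, Pi.add_apply, ContinuousLinearMap.add_apply]
      have hr : (‖P h‖ ^ 2 + ‖P h‖ ^ 2) - ‖h‖ ^ 2 = ‖P h‖ ^ 2 - ‖h - P h‖ ^ 2 := by
        linarith [hpyth h]
      norm_cast
      show ((‖P h‖ ^ 2 + ‖P h‖ ^ 2 : ℝ) : ℂ) - ((‖h‖ ^ 2 : ℝ) : ℂ)
          = ((‖P h‖ ^ 2 - ‖h - P h‖ ^ 2 : ℝ) : ℂ)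
      exact_mod_cast hr
    rw [h1, Complex.zero_le_real]
    constructor
    · intro hr
      have h2 : ‖h - P h‖ ^ 2 ≤ ‖P h‖ ^ 2 := by linarith
      exact le_of_pow_le_pow_left₀ two_ne_zero (norm_nonneg _) h2
    · intro hr
      have := pow_le_pow_left₀ (norm_nonneg _) hr 2
      linarith
  constructor
  · -- forward
    intro hpos
    have hkey : ∀ h ∈ Hp, ‖h - P h‖ ≤ ‖P h‖ := fun h hh => (key h).1 (hpos h hh)
    haveI : CompleteSpace Hp := hHp_closed.completeSpace_coe
    set f : Hp →ₗ[ℂ] H := (P : H →ₗ[ℂ] H).comp Hp.subtype with hfdef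
    have hfapp : ∀ x : Hp, f x = P (x : H) := fun x => rfl
    have hbound : ∀ x : Hp, ‖(x : H)‖ ≤ Real.sqrt 2 * ‖f x‖ := by
      intro x
      have h1 := hkey (x : H) x.2
      have h2 := hpyth (x : H)
      have h3 : ‖(x : H)‖ ^ 2 ≤ 2 * ‖P (x : H)‖ ^ 2 := by
        nlinarith [norm_nonneg (P (x : H)), norm_nonneg ((x : H) - P (x : H))]
      have hs : Real.sqrt (‖(x : H)‖ ^ 2) ≤ Real.sqrt (2 * ‖P (x : H)‖ ^ 2) :=
        Real.sqrt_le_sqrt h3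
      rw [Real.sqrt_sq (norm_nonneg _)] at hs
      calc ‖(x : H)‖ ≤ Real.sqrt (2 * ‖P (x : H)‖ ^ 2) := hs
        _ = Real.sqrt 2 * ‖P (x : H)‖ := by
            rw [Real.sqrt_mul (by norm_num), Real.sqrt_sq (norm_nonneg _)]
        _ = Real.sqrt 2 * ‖f x‖ := by rw [hfapp]
    have hanti : AntilipschitzWith (Real.sqrt 2).toNNReal ⇑f := by
      apply AntilipschitzWith.of_le_mul_dist
      intro x y
      have hb := hbound (x - y)
      rw [map_sub] at hb
      have hcoe : ((Real.sqrt 2).toNNReal : ℝ) = Real.sqrt 2 :=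
        Real.coe_toNNReal _ (Real.sqrt_nonneg 2)
      rw [Subtype.dist_eq, dist_eq_norm, dist_eq_norm, hcoe]
      simpa using hb
    have hucont : UniformContinuous ⇑f := by
      have : (⇑f : Hp → H) = ⇑(P.comp Hp.subtypeL) := rfl
      rw [this]
      exact (P.comp Hp.subtypeL).uniformContinuous
    set N : Submodule ℂ H := LinearMap.range f with hNdef
    have hNclosed : IsClosed (N : Set H) := by
      have : (N : Set H) = Set.range ⇑f := by
        ext v; simp [hNdef, LinearMap.mem_range, Set.mem_range]
      rw [this]
      exact hanti.isClosed_range hucont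
    haveI : CompleteSpace N := hNclosed.completeSpace_coe
    have hinj : Function.Injective ⇑f := hanti.injective
    set e : Hp ≃ₗ[ℂ] N := LinearEquiv.ofInjective f hinj with hedef
    have he : ∀ x : Hp, ((e x : N) : H) = P (x : H) := fun x => by
      rw [hedef]; exact LinearEquiv.ofInjective_apply f x
    have hP_of : ∀ n : N, P ((e.symm n : Hp) : H) = (n : H) := fun n => by
      conv_rhs => rw [← e.apply_symm_apply n]
      exact (he _).symm
    set D : N →ₗ[ℂ] H :=
      (LinearMap.id - (P : H →ₗ[ℂ] H)).comp (Hp.subtype.comp e.symm.toLinearMap) with hDdef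
    have hD : ∀ n : N, D n = ((e.symm n : Hp) : H) - P ((e.symm n : Hp) : H) := fun n => rfl
    have hDmem : ∀ n : N, D n ∈ (LinearMap.range (P : H →ₗ[ℂ] H))ᗮ := by
      intro n
      rw [Submodule.mem_orthogonal]
      rintro u ⟨w, rfl⟩
      rw [hD]
      exact hPerp w _
    have hDnorm : ∀ n : N, ‖D n‖ ≤ ‖(n : H)‖ := by
      intro n
      rw [hD, ← hP_of n]
      exact hkey _ (e.symm n).2
    refine ⟨LinearMap.codRestrict _
      (D.comp (((N.orthogonalProjectionOnto).toLinearMap).comp (LinearMap.range (P : H →ₗ[ℂ] H)).subtype))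
      (fun u => hDmem _), ?_, ?_⟩
    · intro u
      have h1 : ‖D (N.orthogonalProjectionOnto (u : H))‖ ≤ ‖((N.orthogonalProjectionOnto (u : H) : N) : H)‖ :=
        hDnorm _
      have h2 : ‖(N.orthogonalProjectionOnto (u : H) : H)‖ ≤ ‖(u : H)‖ := by
        have := (N.orthogonalProjectionOnto).le_opNorm (u : H)
        have hno := N.orthogonalProjectionOnto_norm_le
        calc ‖(N.orthogonalProjectionOnto (u : H) : H)‖ = ‖N.orthogonalProjectionOnto (u : H)‖ := rfl
          _ ≤ ‖N.orthogonalProjectionOnto‖ * ‖(u : H)‖ := this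
          _ ≤ 1 * ‖(u : H)‖ := by
              apply mul_le_mul_of_nonneg_right hno (norm_nonneg _)
          _ = ‖(u : H)‖ := one_mul _
      calc ‖(LinearMap.codRestrict _ _ _ : _ →ₗ[ℂ] _) u‖
          = ‖D (N.orthogonalProjectionOnto (u : H))‖ := rfl
        _ ≤ ‖(u : H)‖ := le_trans h1 h2
        _ = ‖u‖ := rfl
    · intro h hh
      set x : Hp := ⟨h, hh⟩ with hxdef
      set n : N := e x with hndef
      have hnH : (n : H) = P h := he x
      refine ⟨⟨P h, ⟨h, rfl⟩⟩, ?_⟩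
      have hproj : N.orthogonalProjectionOnto (P h) = n := by
        rw [← hnH]
        exact Submodule.orthogonalProjectionOnto_mem_subspace_eq_self n
      show h = P h + _
      have : ((LinearMap.codRestrict _
          (D.comp (((N.orthogonalProjectionOnto).toLinearMap).comp (LinearMap.range (P : H →ₗ[ℂ] H)).subtype))
          (fun u => hDmem _) ⟨P h, ⟨h, rfl⟩⟩ : (LinearMap.range (P : H →ₗ[ℂ] H))ᗮ) : H)
          = D (N.orthogonalProjectionOnto (P h)) := rfl
      rw [this, hproj, hD, hndef, e.symm_apply_apply]
      show h = P h + (h - P h)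
      abel
  · -- backward
    rintro ⟨C, hC1, hC2⟩ h hh
    rw [key h]
    obtain ⟨u, hu⟩ := hC2 hh
    have hPu : P (u : H) = (u : H) := by
      obtain ⟨w, hw⟩ := u.2
      rw [← hw]; exact hPP w
    have hPC : P ((C u : (LinearMap.range (P : H →ₗ[ℂ] H))ᗮ) : H) = 0 := by
      set c : H := ((C u : (LinearMap.range (P : H →ₗ[ℂ] H))ᗮ) : H) with hcdef
      have hmem : c ∈ (LinearMap.range (P : H →ₗ[ℂ] H))ᗮ := (C u).2
      have h0 : ⟪P c, c⟫ = 0 := (Submodule.mem_orthogonal _ _).1 hmem (P c) ⟨c, rfl⟩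
      have h1 : ⟪P c, P c⟫ = 0 := by
        rw [hsym, hPP, ← hsym]
        exact h0
      exact inner_self_eq_zero.1 h1
    have hPh : P h = (u : H) := by
      rw [hu, map_add, hPu, hPC, add_zero]
    have hdiff : h - P h = ((C u : (LinearMap.range (P : H →ₗ[ℂ] H))ᗮ) : H) := by
      rw [hPh, hu]; abel
    rw [hdiff, hPh]
    calc ‖((C u : (LinearMap.range (P : H →ₗ[ℂ] H))ᗮ) : H)‖ = ‖C u‖ := rfl
      _ ≤ ‖u‖ := hC1 u
      _ = ‖(u : H)‖ := rfl
end

section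
/- Let θ be a reflection on a complex Hilbert space ℋ with θ = 2P − I, and let Sub_OS(θ) be the collection of closed subspaces M ⊆ ℋ such that ⟨h, θh⟩ ≥ 0 for all h ∈ M, partially ordered by inclusion. Then: (1) for every contraction C : Pℋ → P⊥ℋ, the closed subspace ℋ₊(P,C) := {x + Cx : x ∈ range P} is a maximal element of Sub_OS(θ); and (2) every maximal element of Sub_OS(θ) is of the form ℋ₊(P,C) for some contraction C : Pℋ → P⊥ℋ. -/
open scoped ComplexInnerProductSpace ComplexOrder

set_option linter.unusedSectionVars false
set_option maxHeartbeats 1000000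

/-- The subspace `{x + Cx : x ∈ K}` of `H`, for a linear map `C : K → Kᗮ`. -/
noncomputable def graphSubspace {H : Type*} [NormedAddCommGroup H] [InnerProductSpace ℂ H]
    (K : Submodule ℂ H) (C : K →ₗ[ℂ] Kᗮ) : Submodule ℂ H :=
  LinearMap.range (K.subtype + Kᗮ.subtype.comp C)

/-- The collection `Sub_OS(θ)` of closed subspaces `M` on which `⟪h, θ h⟫ ≥ 0`. -/
def SubOS {H : Type*} [NormedAddCommGroup H] [InnerProductSpace ℂ H]
    (θ : H →L[ℂ] H) : Set (Submodule ℂ H) :=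
  {M | IsClosed (M : Set H) ∧ ∀ h ∈ M, (0 : ℂ) ≤ ⟪h, θ h⟫}

section Aux

variable {H : Type*} [NormedAddCommGroup H] [InnerProductSpace ℂ H] [CompleteSpace H]
variable {P : H →L[ℂ] H}

lemma aux_sym (hP_sa : IsSelfAdjoint P) (x y : H) : ⟪P x, y⟫ = ⟪x, P y⟫ :=
  hP_sa.isSymmetric x y

lemma aux_PP (hP_idem : P ∘L P = P) (h : H) : P (P h) = P h := by
  have := congrArg (fun f : H →L[ℂ] H => f h) hP_idem
  simpa using this

lemma aux_P_mem (hP_idem : P ∘L P = P) {u : H} (hu : u ∈ LinearMap.range (P : H →ₗ[ℂ] H)) : P u = u := by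
  obtain ⟨y, rfl⟩ := hu
  exact aux_PP hP_idem y

lemma aux_sub_mem (hP_sa : IsSelfAdjoint P) (hP_idem : P ∘L P = P) (h : H) :
    h - P h ∈ (LinearMap.range (P : H →ₗ[ℂ] H))ᗮ := by
  rw [Submodule.mem_orthogonal]
  rintro u ⟨y, rfl⟩
  rw [ContinuousLinearMap.coe_coe, aux_sym hP_sa, map_sub, aux_PP hP_idem, sub_self, inner_zero_right]

lemma aux_P_orth (hP_sa : IsSelfAdjoint P) (hP_idem : P ∘L P = P) {v : H}
    (hv : v ∈ (LinearMap.range (P : H →ₗ[ℂ] H))ᗮ) : P v = 0 := by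
  rw [Submodule.mem_orthogonal] at hv
  have h1 : ⟪P v, v⟫ = 0 := hv (P v) ⟨v, rfl⟩
  have h2 : ⟪P v, P v⟫ = 0 := by
    rw [aux_sym hP_sa, aux_PP hP_idem, ← aux_sym hP_sa, h1]
  exact inner_self_eq_zero.mp h2

lemma aux_inner_P (hP_sa : IsSelfAdjoint P) (hP_idem : P ∘L P = P) (h : H) :
    ⟪h, P h⟫ = ((‖P h‖ : ℂ)) ^ 2 := by
  calc ⟪h, P h⟫ = ⟪h, P (P h)⟫ := by rw [aux_PP hP_idem]
    _ = ⟪P h, P h⟫ := (aux_sym hP_sa h (P h)).symm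
    _ = ((‖P h‖ : ℂ)) ^ 2 := inner_self_eq_norm_sq_to_K _

lemma aux_pyth (hP_sa : IsSelfAdjoint P) (hP_idem : P ∘L P = P) (h : H) :
    ‖h‖ ^ 2 = ‖P h‖ ^ 2 + ‖h - P h‖ ^ 2 := by
  have hzero : ⟪P h, h - P h⟫ = 0 := by
    rw [inner_sub_right, aux_sym hP_sa, aux_sym hP_sa h (P h), aux_PP hP_idem, sub_self]
  have h6 := norm_add_sq_eq_norm_sq_add_norm_sq_of_inner_eq_zero (P h) (h - P h) hzero
  have h7 : P h + (h - P h) = h := by abel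
  rw [h7] at h6
  rw [pow_two, pow_two, pow_two]
  exact h6

lemma aux_key (hP_sa : IsSelfAdjoint P) (hP_idem : P ∘L P = P)
    {θ : H →L[ℂ] H} (hθP : θ = 2 • P - 1) (h : H) :
    ⟪h, θ h⟫ = ((‖P h‖ ^ 2 - ‖h - P h‖ ^ 2 : ℝ) : ℂ) := by
  have happ : θ h = P h + P h - h := by
    rw [hθP]; simp [two_smul]
  rw [happ, inner_sub_right, inner_add_right, aux_inner_P hP_sa hP_idem,
    inner_self_eq_norm_sq_to_K]
  have hp := aux_pyth hP_sa hP_idem h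
  have hr : ∀ r : ℝ, (RCLike.ofReal r : ℂ) = Complex.ofReal r := fun r => rfl
  simp only [hr]
  norm_cast
  linarith [hp]

lemma aux_norm_le (hP_sa : IsSelfAdjoint P) (hP_idem : P ∘L P = P)
    {θ : H →L[ℂ] H} (hθP : θ = 2 • P - 1) {M : Submodule ℂ H} (hM : M ∈ SubOS θ)
    {h : H} (hh : h ∈ M) : ‖h - P h‖ ≤ ‖P h‖ := by
  have := hM.2 h hh
  rw [aux_key hP_sa hP_idem hθP, Complex.zero_le_real, sub_nonneg] at this
  have h2 : ‖h - P h‖ ^ 2 ≤ ‖P h‖ ^ 2 := this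
  nlinarith [norm_nonneg (h - P h), norm_nonneg (P h)]

lemma aux_mem_subos (hP_sa : IsSelfAdjoint P) (hP_idem : P ∘L P = P)
    {θ : H →L[ℂ] H} (hθP : θ = 2 • P - 1) {M : Submodule ℂ H}
    (hMc : IsClosed (M : Set H)) (hMb : ∀ h ∈ M, ‖h - P h‖ ≤ ‖P h‖) : M ∈ SubOS θ := by
  refine ⟨hMc, fun h hh => ?_⟩
  rw [aux_key hP_sa hP_idem hθP, Complex.zero_le_real, sub_nonneg]
  have := hMb h hh
  nlinarith [norm_nonneg (h - P h), norm_nonneg (P h)]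

lemma mem_graph_iff {K : Submodule ℂ H} (C : K →ₗ[ℂ] Kᗮ) (h : H) :
    h ∈ graphSubspace K C ↔ ∃ x : K, (x : H) + (C x : H) = h := by
  simp [graphSubspace, LinearMap.mem_range]

end Aux

/-- For a reflection `θ = 2P - 1`: (1) for every contraction
`C : range P → (range P)ᗮ` the subspace `{x + Cx}` is a maximal element of `Sub_OS(θ)`;
(2) every maximal element of `Sub_OS(θ)` has this form. -/

theorem stmt5 {H : Type*} [NormedAddCommGroup H] [InnerProductSpace ℂ H] [CompleteSpace H]
    (θ P : H →L[ℂ] H)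
    (hθ_sa : IsSelfAdjoint θ) (hθ_invol : θ ∘L θ = 1)
    (hP_sa : IsSelfAdjoint P) (hP_idem : P ∘L P = P)
    (hP_range : ∀ h : H, P h = h ↔ θ h = h)
    (hθP : θ = 2 • P - 1) :
    (∀ C : (LinearMap.range (P : H →ₗ[ℂ] H)) →ₗ[ℂ] ((LinearMap.range (P : H →ₗ[ℂ] H))ᗮ),
        (∀ u, ‖C u‖ ≤ ‖u‖) →
          graphSubspace (LinearMap.range (P : H →ₗ[ℂ] H)) C ∈ SubOS θ ∧
            ∀ M ∈ SubOS θ, graphSubspace (LinearMap.range (P : H →ₗ[ℂ] H)) C ≤ M →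
              M = graphSubspace (LinearMap.range (P : H →ₗ[ℂ] H)) C) ∧
    (∀ M ∈ SubOS θ, (∀ M' ∈ SubOS θ, M ≤ M' → M' = M) →
        ∃ C : (LinearMap.range (P : H →ₗ[ℂ] H)) →ₗ[ℂ] ((LinearMap.range (P : H →ₗ[ℂ] H))ᗮ),
          (∀ u, ‖C u‖ ≤ ‖u‖) ∧ M = graphSubspace (LinearMap.range (P : H →ₗ[ℂ] H)) C) := by
  set K : Submodule ℂ H := LinearMap.range (P : H →ₗ[ℂ] H) with hKdef
  -- basic facts
  have hPK : ∀ h : H, P h ∈ K := fun h => ⟨h, rfl⟩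
  have hPu : ∀ u : K, P (u : H) = u := fun u => aux_P_mem hP_idem u.2
  have hPv : ∀ v : Kᗮ, P (v : H) = 0 := fun v => aux_P_orth hP_sa hP_idem v.2
  constructor
  · -- Part 1
    intro C hC
    have hgraph_pos : ∀ h ∈ graphSubspace K C, ‖h - P h‖ ≤ ‖P h‖ := by
      intro h hh
      rw [mem_graph_iff] at hh
      obtain ⟨x, rfl⟩ := hh
      have hP1 : P ((x : H) + (C x : H)) = (x : H) := by
        rw [map_add, hPu, hPv, add_zero]
      rw [hP1, add_sub_cancel_left]
      exact hC x
    have hgraph_closed : IsClosed ((graphSubspace K C : Set H)) := by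
      have hCcont : ∃ Cc : K →L[ℂ] Kᗮ, ∀ x, Cc x = C x := by
        refine ⟨LinearMap.mkContinuous C 1 (fun x => by simpa using hC x), fun x => rfl⟩
      obtain ⟨Cc, hCc⟩ := hCcont
      set F : H →L[ℂ] H :=
        (1 : H →L[ℂ] H) - P - Kᗮ.subtypeL.comp (Cc.comp (P.codRestrict K hPK)) with hF
      have hFapply : ∀ h : H, F h = h - P h - (C ⟨P h, hPK h⟩ : H) := by
        intro h
        simp only [hF, hCc, ContinuousLinearMap.coe_sub', Pi.sub_apply,
          ContinuousLinearMap.coe_comp', Function.comp_apply, Submodule.coe_subtypeL',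
          Submodule.coe_subtype, ContinuousLinearMap.one_apply]
        rfl
      have hset : (graphSubspace K C : Set H) = F ⁻¹' {0} := by
        ext h
        simp only [Set.mem_preimage, Set.mem_singleton_iff, SetLike.mem_coe, mem_graph_iff,
          hFapply]
        constructor
        · rintro ⟨x, rfl⟩
          have hP1 : P ((x : H) + (C x : H)) = (x : H) := by
            rw [map_add, hPu, hPv, add_zero]
          simp only [hP1, Subtype.coe_eta]
          abel
        · intro h0
          refine ⟨⟨P h, hPK h⟩, ?_⟩
          rw [sub_sub, sub_eq_zero] at h0
          exact h0.symm
      rw [hset]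
      exact isClosed_singleton.preimage F.continuous
    refine ⟨aux_mem_subos hP_sa hP_idem hθP hgraph_closed hgraph_pos, ?_⟩
    -- maximality
    intro M hM hle
    refine le_antisymm ?_ hle
    intro h hh
    set x : K := ⟨P h, hPK h⟩ with hx
    have hgM : (x : H) + (C x : H) ∈ M := hle ((mem_graph_iff C _).mpr ⟨x, rfl⟩)
    have hdM : h - ((x : H) + (C x : H)) ∈ M := M.sub_mem hh hgM
    have hPd : P (h - ((x : H) + (C x : H))) = 0 := by
      rw [map_sub, map_add, hPu, hPv, add_zero]
      simp [hx]
    have hnd := aux_norm_le hP_sa hP_idem hθP hM hdM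
    rw [hPd, sub_zero, norm_zero] at hnd
    have : h - ((x : H) + (C x : H)) = 0 := norm_le_zero_iff.mp hnd
    have hhe : h = (x : H) + (C x : H) := sub_eq_zero.mp this
    rw [hhe]
    exact (mem_graph_iff C _).mpr ⟨x, rfl⟩
  · -- Part 2
    intro M hM hmax
    have hKclosed : IsClosed (K : Set H) := by
      have : (K : Set H) = (fun h => P h - h) ⁻¹' {0} := by
        ext h
        simp only [Set.mem_preimage, Set.mem_singleton_iff, SetLike.mem_coe, sub_eq_zero]
        exact ⟨fun hh => aux_P_mem hP_idem hh, fun hh => hh ▸ hPK h⟩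
      rw [this]
      exact isClosed_singleton.preimage (P.continuous.sub continuous_id)
    haveI : CompleteSpace K := hKclosed.completeSpace_coe
    haveI : CompleteSpace M := hM.1.completeSpace_coe
    set φ : M →L[ℂ] K := (P.codRestrict K hPK).comp M.subtypeL with hφ
    have hφapply : ∀ m : M, (φ m : H) = P (m : H) := fun m => rfl
    -- antilipschitz bound
    have hbound : ∀ m : M, ‖m‖ ≤ Real.sqrt 2 * ‖φ m‖ := by
      intro m
      have h1 := aux_pyth hP_sa hP_idem (m : H)
      have h2 := aux_norm_le hP_sa hP_idem hθP hM m.2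
      have h2' : ‖(m : H) - P (m : H)‖ ^ 2 ≤ ‖P (m : H)‖ ^ 2 :=
        pow_le_pow_left₀ (norm_nonneg _) h2 2
      have h3 : ‖(m : H)‖ ^ 2 ≤ 2 * ‖P (m : H)‖ ^ 2 := by linarith
      have h4 : ‖(m : H)‖ ≤ Real.sqrt 2 * ‖P (m : H)‖ := by
        rw [← Real.sqrt_sq (norm_nonneg (m : H)), ← Real.sqrt_sq (norm_nonneg (P (m : H))),
          ← Real.sqrt_mul (by norm_num : (0:ℝ) ≤ 2)]
        exact Real.sqrt_le_sqrt (by nlinarith)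
      calc ‖m‖ = ‖(m : H)‖ := rfl
        _ ≤ Real.sqrt 2 * ‖P (m : H)‖ := h4
        _ = Real.sqrt 2 * ‖φ m‖ := by rw [← hφapply]; rfl
    have hanti : AntilipschitzWith (Real.sqrt 2).toNNReal φ := by
      apply φ.antilipschitz_of_bound
      intro m
      rw [Real.coe_toNNReal _ (Real.sqrt_nonneg 2)]
      exact hbound m
    have hrange_closed : IsClosed (Set.range φ) :=
      hanti.isClosed_range φ.uniformContinuous
    set K₀ : Submodule ℂ K := LinearMap.range (φ : M →ₗ[ℂ] K) with hK₀
    have hK₀set : (K₀ : Set K) = Set.range φ := by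
      ext u; simp [hK₀, LinearMap.mem_range]
    have hK₀closed : IsClosed (K₀ : Set K) := by rw [hK₀set]; exact hrange_closed
    haveI : CompleteSpace K₀ := hK₀closed.completeSpace_coe
    -- injectivity of φ
    have hφker : ∀ m : M, φ m = 0 → m = 0 := by
      intro m hm
      have hPm : P (m : H) = 0 := by
        have := congrArg (Subtype.val) hm
        rw [hφapply] at this
        simpa using this
      have hn := aux_norm_le hP_sa hP_idem hθP hM m.2
      rw [hPm, sub_zero, norm_zero] at hn
      exact Subtype.ext (norm_le_zero_iff.mp hn)
    have hφinj : Function.Injective φ := by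
      intro a b hab
      have : φ (a - b) = 0 := by rw [map_sub, hab, sub_self]
      have := hφker _ this
      rwa [sub_eq_zero] at this
    -- surjectivity: K₀ = ⊤
    have htop : K₀ = ⊤ := by
      rw [← Submodule.orthogonal_eq_bot_iff, Submodule.eq_bot_iff]
      intro x hx
      rw [Submodule.mem_orthogonal] at hx
      set M' : Submodule ℂ H := (M ⊔ (ℂ ∙ (x : H))).topologicalClosure with hM'
      have hsubset : ((M ⊔ (ℂ ∙ (x : H)) : Submodule ℂ H) : Set H) ⊆ {h : H | ‖h - P h‖ ≤ ‖P h‖} := by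
        intro y hy
        obtain ⟨m, hm, z, hz, rfl⟩ := Submodule.mem_sup.mp hy
        obtain ⟨c, rfl⟩ := Submodule.mem_span_singleton.mp hz
        have hPx : P (x : H) = (x : H) := hPu x
        have hPy : P (m + c • (x : H)) = P m + c • (x : H) := by
          rw [map_add, map_smul, hPx]
        have hsub : m + c • (x : H) - P (m + c • (x : H)) = m - P m := by
          rw [hPy]; abel
        have horth : ⟪P m, c • (x : H)⟫ = 0 := by
          have hPmK₀ : (⟨P m, hPK m⟩ : K) ∈ K₀ := ⟨⟨m, hm⟩, rfl⟩
          have h0 : ⟪(⟨P m, hPK m⟩ : K), x⟫ = 0 := hx _ hPmK₀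
          rw [Submodule.coe_inner] at h0
          rw [inner_smul_right, h0, mul_zero]
        have hge : ‖P m‖ ≤ ‖P m + c • (x : H)‖ := by
          have := norm_add_sq_eq_norm_sq_add_norm_sq_of_inner_eq_zero _ _ horth
          have h5 : ‖P m‖ ^ 2 ≤ ‖P m + c • (x : H)‖ ^ 2 := by nlinarith [sq_nonneg ‖c • (x:H)‖]
          nlinarith [norm_nonneg (P m + c • (x : H)), norm_nonneg (P m)]
        rw [Set.mem_setOf_eq, hsub, hPy]
        exact le_trans (aux_norm_le hP_sa hP_idem hθP hM hm) hge
      have hM'OS : M' ∈ SubOS θ := by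
        refine aux_mem_subos hP_sa hP_idem hθP (Submodule.isClosed_topologicalClosure _) ?_
        intro h hh
        have hcl : (M' : Set H) ⊆ {h : H | ‖h - P h‖ ≤ ‖P h‖} := by
          rw [hM', Submodule.topologicalClosure_coe]
          refine closure_minimal hsubset ?_
          exact isClosed_le ((continuous_id.sub P.continuous).norm) (P.continuous.norm)
        exact hcl hh
      have hMle : M ≤ M' :=
        le_trans le_sup_left (Submodule.le_topologicalClosure _)
      have hM'eq : M' = M := hmax M' hM'OS hMle
      have hxM : (x : H) ∈ M := by
        rw [← hM'eq]
        exact Submodule.le_topologicalClosure _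
          (Submodule.mem_sup_right (Submodule.mem_span_singleton_self _))
      have hxK₀ : x ∈ K₀ := by
        refine ⟨⟨(x : H), hxM⟩, ?_⟩
        exact Subtype.ext (hPu x)
      have := hx x hxK₀
      exact inner_self_eq_zero.mp this
    have hφsurj : Function.Surjective φ :=
      LinearMap.range_eq_top.mp htop
    -- build the equivalence and C
    set e : M ≃ₗ[ℂ] K := LinearEquiv.ofBijective (φ : M →ₗ[ℂ] K) ⟨hφinj, hφsurj⟩ with he
    have heapply : ∀ m : M, ((e m : K) : H) = P (m : H) := fun m => rfl
    set ψ : M →ₗ[ℂ] Kᗮ :=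
      { toFun := fun m => ⟨(m : H) - P (m : H), aux_sub_mem hP_sa hP_idem (m : H)⟩
        map_add' := by
          intro a b
          ext
          simp only [Submodule.coe_add, map_add, Submodule.coe_mk]
          push_cast
          abel
        map_smul' := by
          intro c a
          ext
          simp only [Submodule.coe_smul, map_smul, RingHom.id_apply, Submodule.coe_mk]
          push_cast
          rw [smul_sub] } with hψ
    have hψapply : ∀ m : M, ((ψ m : Kᗮ) : H) = (m : H) - P (m : H) := fun m => rfl
    refine ⟨ψ.comp (e.symm : K →ₗ[ℂ] M), ?_, ?_⟩
    · intro u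
      set m : M := e.symm u with hm
      have h1 : ((e m : K) : H) = (u : H) := by rw [hm, e.apply_symm_apply]
      have h2 : P (m : H) = (u : H) := by rw [← heapply, h1]
      have h3 : (ψ.comp (e.symm : K →ₗ[ℂ] M)) u = ψ m := rfl
      rw [h3]
      have h4 : ‖ψ m‖ = ‖(m : H) - P (m : H)‖ := rfl
      have h5 : ‖u‖ = ‖(u : H)‖ := rfl
      rw [h4, h5, ← h2]
      exact aux_norm_le hP_sa hP_idem hθP hM m.2
    · ext h
      rw [mem_graph_iff]
      constructor
      · intro hh
        refine ⟨e ⟨h, hh⟩, ?_⟩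
        have h1 : ((e ⟨h, hh⟩ : K) : H) = P h := heapply ⟨h, hh⟩
        have h2 : (ψ.comp (e.symm : K →ₗ[ℂ] M)) (e ⟨h, hh⟩) = ψ ⟨h, hh⟩ := by
          have : (e.symm : K →ₗ[ℂ] M) (e ⟨h, hh⟩) = ⟨h, hh⟩ := e.symm_apply_apply _
          rw [LinearMap.comp_apply, this]
        rw [h2, h1, hψapply]
        abel
      · rintro ⟨x, rfl⟩
        set m : M := e.symm x with hm
        have h1 : ((e m : K) : H) = (x : H) := by rw [hm, e.apply_symm_apply]
        have h2 : P (m : H) = (x : H) := by rw [← heapply, h1]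
        have h3 : (ψ.comp (e.symm : K →ₗ[ℂ] M)) x = ψ m := rfl
        rw [h3, hψapply, ← h2]
        have : P (m : H) + ((m : H) - P (m : H)) = (m : H) := by abel
        rw [this]
        exact m.2
end

section
/- Let θ be a reflection on a complex Hilbert space ℋ, let U : ℋ → ℋ be a unitary operator with θUθ = U*, and let ℋ₊ ⊆ ℋ be a closed subspace with U(ℋ₊) ⊆ ℋ₊ and ⟨h₊, θh₊⟩ ≥ 0 for all h₊ ∈ ℋ₊ (O.S. positivity). Then the operator induced by U on the θ-renormalized space is a selfadjoint contraction; concretely: (1) ⟨Ux, θy⟩ = ⟨x, θUy⟩ for all x, y ∈ ℋ₊ (symmetry), and (2) ⟨Ux, θUx⟩ ≤ ⟨x, θx⟩ for all x ∈ ℋ₊ (contractivity in the renormalized seminorm). -/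
open scoped ComplexInnerProductSpace ComplexOrder
open ContinuousLinearMap

/-- Cauchy–Schwarz for a positive hermitian sesquilinear form given pointwise. -/
lemma cs_aux {H : Type*} [NormedAddCommGroup H] [InnerProductSpace ℂ H]
    (B : H → H → ℂ) (Hp : Submodule ℂ H)
    (hadd : ∀ a b c, B (a + b) c = B a c + B b c)
    (hsmul : ∀ (t : ℂ) a c, B (t • a) c = (starRingEnd ℂ t) * B a c)
    (haddr : ∀ a b c, B a (b + c) = B a b + B a c)
    (hsmulr : ∀ (t : ℂ) a c, B a (t • c) = t * B a c)
    (hherm : ∀ a c, B c a = starRingEnd ℂ (B a c))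
    (hpos : ∀ a ∈ Hp, 0 ≤ B a a)
    {a c : H} (ha : a ∈ Hp) (hc : c ∈ Hp) :
    ‖B a c‖ ^ 2 ≤ (B a a).re * (B c c).re := by
  set b0 : ℂ := B a c with hb0
  have key : ∀ r : ℝ, 0 ≤ ((B c c).re * ‖b0‖ ^ 2) * (r * r) + (2 * ‖b0‖ ^ 2) * r
      + (B a a).re := by
    intro r
    set t : ℂ := (r : ℂ) * starRingEnd ℂ b0 with ht
    have hmem : a + t • c ∈ Hp := Hp.add_mem ha (Hp.smul_mem _ hc)
    have h0 : (0 : ℂ) ≤ B (a + t • c) (a + t • c) := hpos _ hmem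
    have hre : 0 ≤ (B (a + t • c) (a + t • c)).re := by
      rw [Complex.le_def] at h0; simpa using h0.1
    have hexp : B (a + t • c) (a + t • c)
        = B a a + t * b0 + (starRingEnd ℂ t) * (starRingEnd ℂ b0)
          + ((starRingEnd ℂ t) * t) * B c c := by
      simp only [hadd, haddr, hsmul, hsmulr]
      rw [hherm a c]
      try rw [← hb0]
      try ring
    have hcb : starRingEnd ℂ b0 * b0 = ((‖b0‖ ^ 2 : ℝ) : ℂ) := by
      rw [mul_comm, Complex.mul_conj, Complex.normSq_eq_norm_sq]
      try push_cast
      try ring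
    have htb : t * b0 = ((r * ‖b0‖ ^ 2 : ℝ) : ℂ) := by
      rw [ht, mul_assoc, hcb]; push_cast; ring
    have htc : starRingEnd ℂ t * starRingEnd ℂ b0 = ((r * ‖b0‖ ^ 2 : ℝ) : ℂ) := by
      have := congrArg (starRingEnd ℂ) htb
      rw [map_mul] at this
      rw [mul_comm] at this ⊢
      rw [this]; simp [Complex.conj_ofReal]
    have htt : starRingEnd ℂ t * t = (((r * r) * ‖b0‖ ^ 2 : ℝ) : ℂ) := by
      rw [ht, map_mul, Complex.conj_ofReal, Complex.conj_conj]
      rw [show (r:ℂ) * b0 * ((r:ℂ) * starRingEnd ℂ b0)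
          = (r:ℂ) * (r:ℂ) * (starRingEnd ℂ b0 * b0) by ring, hcb]
      push_cast; ring
    rw [hexp, htb, htc, htt] at hre
    simp only [Complex.add_re, Complex.ofReal_re, Complex.re_ofReal_mul] at hre
    nlinarith [hre]
  have hd := discrim_le_zero key
  rw [discrim] at hd
  have hA : 0 ≤ (B a a).re := by
    have := hpos a ha; rw [Complex.le_def] at this; simpa using this.1
  have hC : 0 ≤ (B c c).re := by
    have := hpos c hc; rw [Complex.le_def] at this; simpa using this.1
  rcases eq_or_lt_of_le (norm_nonneg b0) with h | h
  · rw [← h]; simpa using mul_nonneg hA hC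
  · nlinarith [hd, mul_pos h h, hA, hC]

/-- Let `θ` be a reflection, `U` unitary with `θUθ = U*`, and `Hp` a
`U`-invariant closed subspace satisfying O.S. positivity.  Then the operator induced by
`U` on the `θ`-renormalized space is a selfadjoint contraction:
`⟪Ux, θ y⟫ = ⟪x, θ (U y)⟫` and `⟪Ux, θ (Ux)⟫ ≤ ⟪x, θ x⟫` for `x, y ∈ Hp`. -/
theorem stmt10 {H : Type*} [NormedAddCommGroup H] [InnerProductSpace ℂ H] [CompleteSpace H]
    (θ U : H →L[ℂ] H) (hθ_sa : IsSelfAdjoint θ) (hθ_invol : θ ∘L θ = 1)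
    (hU₁ : (ContinuousLinearMap.adjoint U) ∘L U = 1)
    (hU₂ : U ∘L (ContinuousLinearMap.adjoint U) = 1)
    (hsym : θ ∘L U ∘L θ = ContinuousLinearMap.adjoint U)
    (Hp : Submodule ℂ H) (hHp_closed : IsClosed (Hp : Set H))
    (hinv : ∀ h ∈ Hp, U h ∈ Hp)
    (hOS : ∀ h ∈ Hp, (0 : ℂ) ≤ ⟪h, θ h⟫) :
    (∀ x ∈ Hp, ∀ y ∈ Hp, ⟪U x, θ y⟫ = ⟪x, θ (U y)⟫) ∧
      (∀ x ∈ Hp, ⟪U x, θ (U x)⟫ ≤ ⟪x, θ x⟫) := by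
  -- θ moves across the inner product
  have hθmove : ∀ a b : H, ⟪θ a, b⟫ = ⟪a, θ b⟫ := fun a b => by
    conv_lhs => rw [← hθ_sa.adjoint_eq]
    rw [adjoint_inner_left]
  have hθθ : ∀ a : H, θ (θ a) = a := fun a => by
    have := congrArg (fun T : H →L[ℂ] H => T a) hθ_invol
    simpa using this
  -- Part 1 (for all vectors)
  have sym : ∀ x y : H, ⟪U x, θ y⟫ = ⟪x, θ (U y)⟫ := by
    intro x y
    have : ⟪U x, θ y⟫ = ⟪x, (ContinuousLinearMap.adjoint U) (θ y)⟫ := by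
      rw [adjoint_inner_right]
    rw [this, ← hsym]
    simp [hθθ]
  refine ⟨fun x _ y _ => sym x y, ?_⟩
  intro x hx
  -- set up the positive hermitian form B
  set B : H → H → ℂ := fun a c => ⟪a, θ c⟫ with hB
  have hherm : ∀ a c, B a c = starRingEnd ℂ (B c a) := by
    intro a c
    rw [hB]; simp only
    rw [← inner_conj_symm, hθmove]
  have symB : ∀ n : ℕ, ∀ a c : H, B ((U ^ n) a) c = B a ((U ^ n) c) := by
    intro n
    induction n with
    | zero => simp
    | succ k ih =>
      intro a c
      have h1 : (U ^ (k+1)) a = (U ^ k) (U a) := by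
        rw [pow_succ]; rfl
      have h2 : (U ^ (k+1)) c = (U ^ k) (U c) := by
        rw [pow_succ]; rfl
      rw [h1, ih (U a) c]
      show ⟪U a, θ ((U ^ k) c)⟫ = _
      rw [sym a ((U ^ k) c)]
      have h3 : U ((U ^ k) c) = (U ^ (k+1)) c := by rw [pow_succ']; rfl
      try rw [h3]
      try rfl
  have hpowmem : ∀ n : ℕ, (U ^ n) x ∈ Hp := by
    intro n
    induction n with
    | zero => simpa using hx
    | succ k ih =>
      have : (U ^ (k+1)) x = U ((U ^ k) x) := by rw [pow_succ']; rfl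
      rw [this]; exact hinv _ ih
  -- Cauchy–Schwarz instance
  have cs : ∀ a ∈ Hp, ∀ c ∈ Hp, ‖B a c‖ ^ 2 ≤ (B a a).re * (B c c).re := by
    intro a ha c hc
    refine cs_aux B Hp ?_ ?_ ?_ ?_ ?_ (fun h hh => hOS h hh) ha hc
    · intro a b c; simp [hB, inner_add_left]
    · intro t a c; simp [hB, inner_smul_left]; ring
    · intro a b c; simp [hB, inner_add_right]
    · intro t a c; simp [hB, inner_smul_right]
    · intro a c; rw [hherm]; try simp
  -- p n := re B(Uⁿx, Uⁿx); key recursion p m ^ 2 ≤ p 0 * p (2m)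
  set p : ℕ → ℝ := fun n => (B ((U ^ n) x) ((U ^ n) x)).re with hp
  have hp_nonneg : ∀ n, 0 ≤ p n := by
    intro n
    have := hOS _ (hpowmem n)
    rw [Complex.le_def] at this
    simpa [hp, hB] using this.1
  have hBreal : ∀ n, B ((U ^ n) x) ((U ^ n) x) = (p n : ℂ) := by
    intro n
    have h := hOS _ (hpowmem n)
    rw [Complex.le_def] at h
    have him : (B ((U ^ n) x) ((U ^ n) x)).im = 0 := by
      simpa [hB] using h.2.symm
    exact Complex.ext (by simp [hp]) (by rw [Complex.ofReal_im]; exact him)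
  have hmove : ∀ m : ℕ, B ((U ^ m) x) ((U ^ m) x) = B x ((U ^ (2 * m)) x) := by
    intro m
    rw [symB m]
    have : (U ^ m) ((U ^ m) x) = (U ^ (2 * m)) x := by
      rw [two_mul, pow_add]; rfl
    rw [this]
  have hrec : ∀ m : ℕ, p m ^ 2 ≤ p 0 * p (2 * m) := by
    intro m
    have h1 := cs x hx ((U ^ (2 * m)) x) (hpowmem (2 * m))
    have h2 : ‖B x ((U ^ (2*m)) x)‖ ^ 2 = p m ^ 2 := by
      rw [← hmove, hBreal]
      simp [abs_of_nonneg (hp_nonneg m)]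
    rw [h2] at h1
    have h3 : (B x x).re = p 0 := by simp [hp]
    rw [h3] at h1
    exact h1
  -- uniform bound M on p
  have hUiso : ∀ a : H, ‖U a‖ = ‖a‖ := by
    intro a
    have h1 : ⟪U a, U a⟫ = ⟪a, a⟫ := by
      rw [← adjoint_inner_right]
      have := congrArg (fun T : H →L[ℂ] H => T a) hU₁
      simp only [comp_apply, one_apply] at this
      rw [this]; rfl
    have h2 : ‖U a‖ ^ 2 = ‖a‖ ^ 2 := by
      rw [inner_self_eq_norm_sq_to_K, inner_self_eq_norm_sq_to_K] at h1
      exact_mod_cast h1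
    rw [← Real.sqrt_sq (norm_nonneg (U a)), ← Real.sqrt_sq (norm_nonneg a), h2]
  have hpowiso : ∀ n : ℕ, ‖(U ^ n) x‖ = ‖x‖ := by
    intro n
    induction n with
    | zero => simp
    | succ k ih =>
      have : (U ^ (k+1)) x = U ((U ^ k) x) := by rw [pow_succ']; rfl
      rw [this, hUiso, ih]
  have hMbound : ∀ n, p n ≤ ‖θ‖ * ‖x‖ ^ 2 := by
    intro n
    have h1 : p n ≤ ‖B ((U ^ n) x) ((U ^ n) x)‖ := by
      rw [hBreal]; simpa using le_abs_self (p n)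
    have h2 : ‖B ((U ^ n) x) ((U ^ n) x)‖ ≤ ‖(U ^ n) x‖ * ‖θ ((U ^ n) x)‖ :=
      norm_inner_le_norm _ _
    have h3 : ‖θ ((U ^ n) x)‖ ≤ ‖θ‖ * ‖(U ^ n) x‖ := le_opNorm θ _
    calc p n ≤ ‖(U ^ n) x‖ * ‖θ ((U ^ n) x)‖ := h1.trans h2
      _ ≤ ‖(U ^ n) x‖ * (‖θ‖ * ‖(U ^ n) x‖) := by
          exact mul_le_mul_of_nonneg_left h3 (norm_nonneg _)
      _ = ‖θ‖ * ‖x‖ ^ 2 := by rw [hpowiso]; ring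
  set M : ℝ := ‖θ‖ * ‖x‖ ^ 2 with hM
  have hM0 : 0 ≤ M := le_trans (hp_nonneg 0) (hMbound 0)
  -- iterate: p 1 ^ (2^k) ≤ p 0 ^ (2^k - 1) * p (2^k)
  have hiter : ∀ k : ℕ, p 1 ^ (2 ^ k) ≤ p 0 ^ (2 ^ k - 1) * p (2 ^ k) := by
    intro k
    induction k with
    | zero => simp
    | succ k ih =>
      have e1 : (2 : ℕ) ^ (k + 1) = 2 ^ k + 2 ^ k := by ring
      have hpk : 1 ≤ 2 ^ k := Nat.one_le_two_pow
      have step : p (2 ^ k) ^ 2 ≤ p 0 * p (2 ^ (k+1)) := by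
        have := hrec (2 ^ k)
        rwa [show 2 * 2 ^ k = 2 ^ (k+1) by ring] at this
      calc p 1 ^ 2 ^ (k+1) = (p 1 ^ 2 ^ k) ^ 2 := by
            rw [← pow_mul, pow_succ]
        _ ≤ (p 0 ^ (2 ^ k - 1) * p (2 ^ k)) ^ 2 := by
            apply pow_le_pow_left₀ (pow_nonneg (hp_nonneg 1) _) ih
        _ = p 0 ^ (2 ^ k - 1) * p 0 ^ (2 ^ k - 1) * p (2 ^ k) ^ 2 := by ring
        _ ≤ p 0 ^ (2 ^ k - 1) * p 0 ^ (2 ^ k - 1) * (p 0 * p (2 ^ (k+1))) := by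
            apply mul_le_mul_of_nonneg_left step
            have := hp_nonneg 0
            positivity
        _ = p 0 ^ (2 ^ k - 1 + (2 ^ k - 1) + 1) * p (2 ^ (k+1)) := by
            rw [pow_add, pow_add, pow_one]; ring
        _ = p 0 ^ (2 ^ (k+1) - 1) * p (2 ^ (k+1)) := by
            congr 2
            omega
  -- conclude p 1 ≤ p 0
  have hmain : p 1 ≤ p 0 := by
    by_contra hlt
    push_neg at hlt
    have h0 : 0 ≤ p 0 := hp_nonneg 0
    have h1pos : 0 < p 1 := lt_of_le_of_lt h0 hlt
    -- from hiter and hMbound: p 1 ^ 2^k ≤ p 0 ^ (2^k - 1) * M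
    have hb : ∀ k : ℕ, p 1 ^ (2 ^ k) ≤ p 0 ^ (2 ^ k - 1) * M := by
      intro k
      have := hp_nonneg 0
      exact (hiter k).trans (mul_le_mul_of_nonneg_left (hMbound _) (by positivity))
    rcases eq_or_lt_of_le h0 with h0e | h0pos
    · have hb1 := hb 1
      rw [← h0e] at hb1
      have hle : p 1 ^ (2 : ℕ) ≤ 0 := by
        simpa using hb1
      nlinarith [hle, h1pos]
    · -- divide
      set ρ : ℝ := p 1 / p 0 with hρ
      have hρ1 : 1 < ρ := by
        rw [hρ]; exact (one_lt_div h0pos).mpr hlt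
      have hbound : ∀ k : ℕ, ρ ^ (2 ^ k) ≤ M / p 0 := by
        intro k
        have hpk : 1 ≤ 2 ^ k := Nat.one_le_two_pow
        have := hb k
        rw [hρ, div_pow, div_le_div_iff₀ (pow_pos h0pos _) h0pos]
        calc p 1 ^ 2 ^ k * p 0 ≤ p 0 ^ (2 ^ k - 1) * M * p 0 := by
              exact mul_le_mul_of_nonneg_right this h0pos.le
          _ = M * (p 0 ^ (2 ^ k - 1) * p 0 ^ 1) := by ring
          _ = M * p 0 ^ (2 ^ k - 1 + 1) := by rw [pow_add]
          _ = M * p 0 ^ (2 ^ k) := by congr 2; omega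
      have hρk : ∀ k : ℕ, ρ ^ k ≤ M / p 0 := by
        intro k
        calc ρ ^ k ≤ ρ ^ (2 ^ k) :=
              pow_le_pow_right₀ hρ1.le (Nat.lt_two_pow_self).le
          _ ≤ M / p 0 := hbound k
      obtain ⟨k, hk⟩ := pow_unbounded_of_one_lt (M / p 0) hρ1
      exact absurd (hρk k) (not_le.mpr hk)
  -- convert back to the complex inequality
  have e1 : ⟪U x, θ (U x)⟫ = B ((U ^ 1) x) ((U ^ 1) x) := by simp [hB]
  have e0 : ⟪x, θ x⟫ = B ((U ^ 0) x) ((U ^ 0) x) := by simp [hB]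
  rw [e1, e0, hBreal 1, hBreal 0]
  rw [Complex.le_def]
  constructor
  · simpa using hmain
  · simp
end

section
/- Let θ = 2P − I be a reflection on a complex Hilbert space ℋ, let C : Pℋ → P⊥ℋ be a contraction, and let ℋ₊ := {x + Cx : x ∈ range P}. Let U be a unitary operator on ℋ with θUθ = U* and U(ℋ₊) ⊆ ℋ₊. Then for every x ∈ range P there is a unique y ∈ range P with U(x + Cx) = y + Cy, and the contractivity estimate ‖y‖² − ‖Cy‖² ≤ ‖x‖² − ‖Cx‖² holds. -/
open scoped ComplexInnerProductSpace ComplexOrder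
open ContinuousLinearMap

set_option maxHeartbeats 1600000 in
/-- Let `θ = 2P - 1` be a reflection with fixed space `K = range P`,
`C : range P → (range P)ᗮ` a contraction, and `Hp := {x + Cx : x ∈ range P}`.  If `U` is
unitary with `θUθ = U*` and `U (Hp) ⊆ Hp`, then for every `x ∈ range P` there is a unique
`y ∈ range P` with `U (x + Cx) = y + Cy`, and `‖y‖² - ‖Cy‖² ≤ ‖x‖² - ‖Cx‖²`. -/
theorem stmt12 {H : Type*} [NormedAddCommGroup H] [InnerProductSpace ℂ H] [CompleteSpace H]
    (θ P U : H →L[ℂ] H)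
    (hθ_sa : IsSelfAdjoint θ) (hθ_invol : θ ∘L θ = 1)
    (hP_sa : IsSelfAdjoint P) (hP_idem : P ∘L P = P)
    (hP_range : ∀ h : H, P h = h ↔ θ h = h)
    (hθP : θ = 2 • P - 1)
    (C : (LinearMap.range (P : H →ₗ[ℂ] H)) →ₗ[ℂ] ((LinearMap.range (P : H →ₗ[ℂ] H))ᗮ))
    (hC : ∀ u : LinearMap.range (P : H →ₗ[ℂ] H), ‖C u‖ ≤ ‖u‖)
    (hU₁ : (ContinuousLinearMap.adjoint U) ∘L U = 1)
    (hU₂ : U ∘L (ContinuousLinearMap.adjoint U) = 1)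
    (hsym : θ ∘L U ∘L θ = ContinuousLinearMap.adjoint U)
    (hinv : ∀ h : H, (∃ u : LinearMap.range (P : H →ₗ[ℂ] H), h = (u : H) + (C u : H)) →
      ∃ u : LinearMap.range (P : H →ₗ[ℂ] H), U h = (u : H) + (C u : H)) :
    ∀ x : LinearMap.range (P : H →ₗ[ℂ] H),
      (∃! y : LinearMap.range (P : H →ₗ[ℂ] H), U ((x : H) + (C x : H)) = (y : H) + (C y : H)) ∧
        ∀ y : LinearMap.range (P : H →ₗ[ℂ] H), U ((x : H) + (C x : H)) = (y : H) + (C y : H) →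
          ‖(y : H)‖ ^ 2 - ‖(C y : H)‖ ^ 2 ≤ ‖(x : H)‖ ^ 2 - ‖(C x : H)‖ ^ 2 := by
  classical
  have hPadj : ContinuousLinearMap.adjoint P = P := hP_sa
  have hPmem : ∀ u : (LinearMap.range (P : H →ₗ[ℂ] H)), P (u : H) = u := by
    rintro ⟨u, w, rfl⟩
    simpa using DFunLike.congr_fun hP_idem w
  have horth : ∀ (u : (LinearMap.range (P : H →ₗ[ℂ] H))) (v : (LinearMap.range (P : H →ₗ[ℂ] H))ᗮ), ⟪(u : H), (v : H)⟫ = 0 := fun u v =>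
    (Submodule.mem_orthogonal (LinearMap.range (P : H →ₗ[ℂ] H)) (v : H)).mp v.2 u u.2
  have horth' : ∀ (v : (LinearMap.range (P : H →ₗ[ℂ] H))ᗮ) (u : (LinearMap.range (P : H →ₗ[ℂ] H))), ⟪(v : H), (u : H)⟫ = 0 := fun v u => by
    rw [← inner_conj_symm, horth u v, map_zero]
  have hPperp : ∀ v : (LinearMap.range (P : H →ₗ[ℂ] H))ᗮ, P (v : H) = 0 := by
    intro v
    have hm : P (v : H) ∈ (LinearMap.range (P : H →ₗ[ℂ] H)) := ⟨(v : H), rfl⟩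
    have h1 : ⟪P (v : H), (v : H)⟫ = 0 := (Submodule.mem_orthogonal (LinearMap.range (P : H →ₗ[ℂ] H)) _).mp v.2 _ hm
    have h3 := ContinuousLinearMap.adjoint_inner_left P (v : H) (P (v : H))
    rw [hPadj] at h3
    have h4 : P (P (v : H)) = P (v : H) := DFunLike.congr_fun hP_idem (v : H)
    rw [h4, h1] at h3
    exact inner_self_eq_zero.mp h3.symm
  have hθ_apply : ∀ (u : (LinearMap.range (P : H →ₗ[ℂ] H))) (v : (LinearMap.range (P : H →ₗ[ℂ] H))ᗮ), θ ((u : H) + (v : H)) = (u : H) - (v : H) := by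
    intro u v
    have h1 : P ((u : H) + (v : H)) = (u : H) := by rw [map_add, hPmem u, hPperp v, add_zero]
    rw [hθP]
    simp only [ContinuousLinearMap.sub_apply, ContinuousLinearMap.smul_apply,
      ContinuousLinearMap.one_apply, h1]
    rw [two_smul]
    abel
  have hθU : ∀ h : H, θ (U h) = ContinuousLinearMap.adjoint U (θ h) := by
    intro h
    have h1 := DFunLike.congr_fun hsym (θ h)
    have h2 : θ (θ h) = h := by simpa using DFunLike.congr_fun hθ_invol h
    simpa [h2] using h1
  have hKrein : ∀ a b : H, ⟪θ (U a), b⟫ = ⟪θ a, U b⟫ := by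
    intro a b
    rw [hθU, ContinuousLinearMap.adjoint_inner_left]
  have hUinner : ∀ a : H, ⟪U a, U a⟫ = ⟪a, a⟫ := by
    intro a
    have h1 := ContinuousLinearMap.adjoint_inner_right U a (U a)
    have h2 : ContinuousLinearMap.adjoint U (U a) = a := by
      simpa using DFunLike.congr_fun hU₁ a
    rw [h2] at h1
    exact h1.symm
  have hUnorm : ∀ a : H, ‖U a‖ ^ 2 = ‖a‖ ^ 2 := by
    intro a
    rw [← inner_self_eq_norm_sq (𝕜 := ℂ), ← inner_self_eq_norm_sq (𝕜 := ℂ), hUinner]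
  have hmem : ∀ u : (LinearMap.range (P : H →ₗ[ℂ] H)), ∃ w : (LinearMap.range (P : H →ₗ[ℂ] H)), U ((u : H) + (C u : H)) = (w : H) + (C w : H) :=
    fun u => hinv _ ⟨u, rfl⟩
  choose f hf using hmem
  have huniq : ∀ y z : (LinearMap.range (P : H →ₗ[ℂ] H)), (y : H) + (C y : H) = (z : H) + (C z : H) → y = z := by
    intro y z hyz
    have h1 : (y : H) - (z : H) = (C z : H) - (C y : H) := by
      rw [sub_eq_sub_iff_add_eq_add, hyz]
      exact add_comm _ _
    have h1' : (y : H) - (z : H) = ((C (z - y) : (LinearMap.range (P : H →ₗ[ℂ] H))ᗮ) : H) := by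
      rw [map_sub, Submodule.coe_sub]
      exact h1
    have hmemK : (y : H) - (z : H) ∈ (LinearMap.range (P : H →ₗ[ℂ] H)) := Submodule.sub_mem (LinearMap.range (P : H →ₗ[ℂ] H)) y.2 z.2
    have hmemKp : (y : H) - (z : H) ∈ (LinearMap.range (P : H →ₗ[ℂ] H))ᗮ := by
      rw [h1']
      exact (C (z - y)).2
    have h0 : ⟪(y : H) - (z : H), (y : H) - (z : H)⟫ = 0 :=
      (Submodule.mem_orthogonal (LinearMap.range (P : H →ₗ[ℂ] H)) _).mp hmemKp _ hmemK
    have : (y : H) = (z : H) := sub_eq_zero.mp (inner_self_eq_zero.mp h0)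
    exact Subtype.ext this
  have hS : ∀ u v : (LinearMap.range (P : H →ₗ[ℂ] H)), ⟪θ ((u : H) + (C u : H)), (v : H) + (C v : H)⟫
      = ⟪(u : H), (v : H)⟫ - ⟪(C u : H), (C v : H)⟫ := by
    intro u v
    rw [hθ_apply u (C u), inner_sub_left, inner_add_right, inner_add_right,
      horth u (C v), horth' (C u) v]
    ring
  set Q : (LinearMap.range (P : H →ₗ[ℂ] H)) → ℝ := fun u => ‖(u : H)‖ ^ 2 - ‖(C u : H)‖ ^ 2 with hQdef
  set Sr : (LinearMap.range (P : H →ₗ[ℂ] H)) → (LinearMap.range (P : H →ₗ[ℂ] H)) → ℝ := fun u v =>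
    RCLike.re ⟪(u : H), (v : H)⟫ - RCLike.re ⟪(C u : H), (C v : H)⟫ with hSrdef
  have hQSr : ∀ u : (LinearMap.range (P : H →ₗ[ℂ] H)), Q u = Sr u u := by
    intro u
    simp only [hQdef, hSrdef]
    rw [inner_self_eq_norm_sq (𝕜 := ℂ), inner_self_eq_norm_sq (𝕜 := ℂ)]
  have hQpos : ∀ u : (LinearMap.range (P : H →ₗ[ℂ] H)), 0 ≤ Q u := by
    intro u
    have h1 : ‖(C u : H)‖ ≤ ‖(u : H)‖ := hC u
    have h2 : ‖(C u : H)‖ ^ 2 ≤ ‖(u : H)‖ ^ 2 := pow_le_pow_left₀ (norm_nonneg _) h1 2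
    simp only [hQdef]
    linarith
  have hQ_expand : ∀ (u v : (LinearMap.range (P : H →ₗ[ℂ] H))) (t : ℝ),
      Q (u + (t : ℂ) • v) = Q u + 2 * t * Sr u v + t ^ 2 * Q v := by
    intro u v t
    have key : ∀ a b : H, ‖a + (t : ℂ) • b‖ ^ 2
        = ‖a‖ ^ 2 + 2 * (t * RCLike.re ⟪a, b⟫) + t ^ 2 * ‖b‖ ^ 2 := by
      intro a b
      rw [norm_add_sq (𝕜 := ℂ), inner_smul_right, norm_smul]
      simp [RCLike.mul_re, mul_pow, sq_abs]
    have e1 : ((u + (t : ℂ) • v : (LinearMap.range (P : H →ₗ[ℂ] H))) : H) = (u : H) + (t : ℂ) • (v : H) := rfl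
    have e2 : ((C (u + (t : ℂ) • v) : (LinearMap.range (P : H →ₗ[ℂ] H))ᗮ) : H) = (C u : H) + (t : ℂ) • (C v : H) := by
      rw [map_add, map_smul]
      rfl
    simp only [hQdef, hSrdef, e1, e2, key]
    ring
  have hCS : ∀ u v : (LinearMap.range (P : H →ₗ[ℂ] H)), (Sr u v) ^ 2 ≤ Q u * Q v := by
    intro u v
    have hd : discrim (Q v) (2 * Sr u v) (Q u) ≤ 0 := by
      apply discrim_le_zero
      intro t
      have h1 := hQ_expand u v t
      have h2 := hQpos (u + (t : ℂ) • v)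
      nlinarith [h1, h2]
    rw [discrim] at hd
    nlinarith [hd]
  have hQkey : ∀ u : (LinearMap.range (P : H →ₗ[ℂ] H)), Q (f u) = Sr u (f (f u)) := by
    intro u
    have h1 : ⟪θ (((f u : (LinearMap.range (P : H →ₗ[ℂ] H))) : H) + (C (f u) : H)), ((f u : (LinearMap.range (P : H →ₗ[ℂ] H))) : H) + (C (f u) : H)⟫
        = ⟪θ ((u : H) + (C u : H)), ((f (f u) : (LinearMap.range (P : H →ₗ[ℂ] H))) : H) + (C (f (f u)) : H)⟫ := by
      conv_lhs => rw [← hf u]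
      rw [hKrein, hf u, hf (f u)]
    rw [hS, hS] at h1
    have h3 := congrArg RCLike.re h1
    simp only [map_sub] at h3
    rw [hQSr]
    simp only [hSrdef]
    exact h3
  have hmain : ∀ x : (LinearMap.range (P : H →ₗ[ℂ] H)), Q (f x) ≤ Q x := by
    intro x
    by_contra hlt
    push_neg at hlt
    set a : ℕ → ℝ := fun n => Q (f^[n] x) with hadef
    have hQa : ∀ n, 0 ≤ a n := fun n => hQpos _
    have hlt' : a 0 < a 1 := by
      simp only [hadef, Function.iterate_one, Function.iterate_zero, id_eq]
      exact hlt
    have harec : ∀ n, (a (n + 1)) ^ 2 ≤ a n * a (n + 2) := by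
      intro n
      have h1 : a (n + 1) = Sr (f^[n] x) (f^[n + 2] x) := by
        simp only [hadef]
        rw [show n + 2 = (n + 1) + 1 from rfl, Function.iterate_succ_apply',
          Function.iterate_succ_apply', Function.iterate_succ_apply']
        exact hQkey (f^[n] x)
      calc (a (n + 1)) ^ 2 = (Sr (f^[n] x) (f^[n + 2] x)) ^ 2 := by rw [h1]
        _ ≤ Q (f^[n] x) * Q (f^[n + 2] x) := hCS _ _
        _ = a n * a (n + 2) := rfl
    set M := ‖(x : H) + (C x : H)‖ ^ 2 with hMdef
    have hnorm : ∀ n, ‖(f^[n] x : H) + (C (f^[n] x) : H)‖ ^ 2 = M := by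
      intro n
      induction n with
      | zero => simp [hMdef]
      | succ n ih =>
        rw [Function.iterate_succ_apply', ← hf (f^[n] x), hUnorm]
        exact ih
    have hbound : ∀ n, a n ≤ M := by
      intro n
      have hp : ‖(f^[n] x : H) + (C (f^[n] x) : H)‖ ^ 2
          = ‖(f^[n] x : H)‖ ^ 2 + ‖(C (f^[n] x) : H)‖ ^ 2 := by
        rw [norm_add_sq (𝕜 := ℂ), horth (f^[n] x) (C (f^[n] x))]
        simp
      have h1 := hnorm n
      have hcn : 0 ≤ ‖(C (f^[n] x) : H)‖ ^ 2 := by positivity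
      simp only [hadef, hQdef]
      linarith [hp, h1, hcn]
    have ha0pos : 0 < a 0 := by
      rcases (hQa 0).lt_or_eq with h | h
      · exact h
      · exfalso
        have h2 := harec 0
        nlinarith [h2, hlt', hQa 2, h]
    set q := a 1 / a 0 with hqdef
    have hq1 : 1 < q := (one_lt_div ha0pos).mpr hlt'
    have hq0 : 0 < q := lt_trans zero_lt_one hq1
    have hinvar : ∀ n, 0 < a n ∧ q * a n ≤ a (n + 1) := by
      intro n
      induction n with
      | zero =>
        refine ⟨ha0pos, ?_⟩
        rw [hqdef, div_mul_cancel₀]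
        exact ne_of_gt ha0pos
      | succ n ih =>
        obtain ⟨hpos, hstep⟩ := ih
        have hpos1 : 0 < a (n + 1) := lt_of_lt_of_le (mul_pos hq0 hpos) hstep
        refine ⟨hpos1, ?_⟩
        have h2 := harec n
        have h3 : a n * (q * a (n + 1)) ≤ a n * a (n + 2) := by
          nlinarith [h2, mul_le_mul_of_nonneg_left hstep hpos1.le]
        exact le_of_mul_le_mul_left h3 hpos
    have hgrow : ∀ n, a 0 * q ^ n ≤ a n := by
      intro n
      induction n with
      | zero => simp
      | succ n ih =>
        have h1 := (hinvar n).2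
        calc a 0 * q ^ (n + 1) = q * (a 0 * q ^ n) := by ring
          _ ≤ q * a n := mul_le_mul_of_nonneg_left ih hq0.le
          _ ≤ a (n + 1) := h1
    obtain ⟨n, hn⟩ := pow_unbounded_of_one_lt (M / a 0) hq1
    rw [div_lt_iff₀ ha0pos] at hn
    have hcomm : q ^ n * a 0 = a 0 * q ^ n := mul_comm _ _
    linarith [hn, hgrow n, hbound n, hcomm]
  intro x
  have hyeq : ∀ y : (LinearMap.range (P : H →ₗ[ℂ] H)), U ((x : H) + (C x : H)) = (y : H) + (C y : H) → y = f x := by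
    intro y hy
    exact huniq y (f x) (by rw [← hy]; exact hf x)
  refine ⟨⟨f x, hf x, hyeq⟩, ?_⟩
  intro y hy
  have h := hyeq y hy
  subst h
  have h2 := hmain x
  simpa [hQdef] using h2
end

section
/- Let θ be a reflection on a complex Hilbert space ℋ and let ℋ₀, ℋ₊, ℋ₋ be closed subspaces with θh₀ = h₀ for all h₀ ∈ ℋ₀, θ(ℋ₊) ⊆ ℋ₋, and θ(ℋ₋) ⊆ ℋ₊. Define the extended subspaces ℋ₊^ex := closure of {h₀ + h₊ : h₀ ∈ ℋ₀, h₊ ∈ ℋ₊} and ℋ₋^ex := closure of {h₀ + h₋ : h₀ ∈ ℋ₀, h₋ ∈ ℋ₋}. Then: (1) θ(ℋ₊^ex) ⊆ ℋ₋^ex and θ(ℋ₋^ex) ⊆ ℋ₊^ex; (2) assuming ⟨h₊, θh₊⟩ ≥ 0 for all h₊ ∈ ℋ₊, the extended O.S. positivity ⟨g, θg⟩ ≥ 0 for all g ∈ ℋ₊^ex holds if and only if |⟨h₊, h₀⟩|² ≤ ⟨h₊, θh₊⟩ · ‖h₀‖² for all h₊ ∈ ℋ₊ and all h₀ ∈ ℋ₀.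 -/
open scoped ComplexInnerProductSpace ComplexOrder

/-- Let `θ` be a reflection, `H₀, Hp, Hm` closed subspaces with
`θ = id` on `H₀`, `θ(Hp) ⊆ Hm`, `θ(Hm) ⊆ Hp`, and set
`Hp^ex := closure (H₀ + Hp)`, `Hm^ex := closure (H₀ + Hm)`.  Then (1) `θ` interchanges the
extended subspaces, and (2) assuming O.S. positivity on `Hp`, O.S. positivity on `Hp^ex`
holds iff `|⟪h₊, h₀⟫|² ≤ ⟪h₊, θ h₊⟫ ‖h₀‖²` for all `h₊ ∈ Hp`, `h₀ ∈ H₀`. -/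
theorem stmt13 {H : Type*} [NormedAddCommGroup H] [InnerProductSpace ℂ H] [CompleteSpace H]
    (θ : H →L[ℂ] H) (hθ_sa : IsSelfAdjoint θ) (hθ_invol : θ ∘L θ = 1)
    (H₀ Hp Hm : Submodule ℂ H)
    (hH₀_closed : IsClosed (H₀ : Set H)) (hHp_closed : IsClosed (Hp : Set H))
    (hHm_closed : IsClosed (Hm : Set H))
    (hfix : ∀ h ∈ H₀, θ h = h)
    (hpm : ∀ h ∈ Hp, θ h ∈ Hm) (hmp : ∀ h ∈ Hm, θ h ∈ Hp) :
    ((∀ g ∈ (H₀ ⊔ Hp).topologicalClosure, θ g ∈ (H₀ ⊔ Hm).topologicalClosure) ∧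
      (∀ g ∈ (H₀ ⊔ Hm).topologicalClosure, θ g ∈ (H₀ ⊔ Hp).topologicalClosure)) ∧
    ((∀ h ∈ Hp, (0 : ℂ) ≤ ⟪h, θ h⟫) →
      ((∀ g ∈ (H₀ ⊔ Hp).topologicalClosure, (0 : ℂ) ≤ ⟪g, θ g⟫) ↔
        ∀ hp ∈ Hp, ∀ h₀ ∈ H₀,
          ‖(⟪hp, h₀⟫ : ℂ)‖ ^ 2 ≤ (⟪hp, θ hp⟫ : ℂ).re * ‖h₀‖ ^ 2)) := by
  have hadj : ∀ x y : H, ⟪θ x, y⟫ = ⟪x, θ y⟫ := by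
    intro x y
    nth_rewrite 1 [← hθ_sa.adjoint_eq]
    exact ContinuousLinearMap.adjoint_inner_left θ y x
  have him : ∀ x : H, (⟪x, θ x⟫ : ℂ).im = 0 := by
    intro x
    have h1 : (starRingEnd ℂ) ⟪x, θ x⟫ = ⟪θ x, x⟫ := inner_conj_symm _ _
    rw [hadj] at h1
    exact Complex.conj_eq_iff_im.mp h1
  -- expansion of the quadratic form on a sum
  have hexp : ∀ h₀ ∈ H₀, ∀ hp : H,
      (⟪h₀ + hp, θ (h₀ + hp)⟫ : ℂ).re
        = ‖h₀‖ ^ 2 + 2 * (⟪hp, h₀⟫ : ℂ).re + (⟪hp, θ hp⟫ : ℂ).re := by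
    intro h₀ h₀mem hp
    have e2 : (⟪h₀, θ hp⟫ : ℂ) = (starRingEnd ℂ) ⟪hp, h₀⟫ := by
      rw [← hadj, hfix h₀ h₀mem, ← inner_conj_symm]
    have e1 : (⟪h₀, h₀⟫ : ℂ).re = ‖h₀‖ ^ 2 := by
      have := inner_self_eq_norm_sq (𝕜 := ℂ) h₀
      simpa using this
    rw [map_add, hfix h₀ h₀mem, inner_add_left, inner_add_right, inner_add_right, e2]
    simp only [Complex.add_re, Complex.conj_re]
    rw [e1]
    ring
  -- part 1
  have part1 : ∀ A B : Submodule ℂ H, (∀ x ∈ A, θ x ∈ B) →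
      ∀ g ∈ A.topologicalClosure, θ g ∈ B.topologicalClosure := by
    intro A B hAB g hg
    have hg' : g ∈ closure (A : Set H) := hg
    have : θ g ∈ closure (B : Set H) :=
      map_mem_closure θ.continuous hg' hAB
    exact this
  have mapsPM : ∀ x ∈ (H₀ ⊔ Hp : Submodule ℂ H), θ x ∈ (H₀ ⊔ Hm : Submodule ℂ H) := by
    intro x hx
    obtain ⟨a, ha, b, hb, rfl⟩ := Submodule.mem_sup.mp hx
    rw [map_add, hfix a ha]
    exact Submodule.mem_sup.mpr ⟨a, ha, θ b, hpm b hb, rfl⟩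
  have mapsMP : ∀ x ∈ (H₀ ⊔ Hm : Submodule ℂ H), θ x ∈ (H₀ ⊔ Hp : Submodule ℂ H) := by
    intro x hx
    obtain ⟨a, ha, b, hb, rfl⟩ := Submodule.mem_sup.mp hx
    rw [map_add, hfix a ha]
    exact Submodule.mem_sup.mpr ⟨a, ha, θ b, hmp b hb, rfl⟩
  refine ⟨⟨part1 _ _ mapsPM, part1 _ _ mapsMP⟩, ?_⟩
  intro hOS
  constructor
  · -- positivity on closure implies the Cauchy–Schwarz type inequality
    intro hpos hp hpmem h₀ h₀mem
    by_cases hb0 : h₀ = 0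
    · simp [hb0]
    · set b := ‖h₀‖ with hbdef
      have hbpos : 0 < b := norm_pos_iff.mpr hb0
      have hb2 : (0 : ℝ) < b ^ 2 := by positivity
      set ip : ℂ := ⟪hp, h₀⟫ with hip
      set c : ℂ := -(((b ^ 2 : ℝ) : ℂ))⁻¹ * (starRingEnd ℂ) ip with hc
      have hg : c • h₀ + hp ∈ (H₀ ⊔ Hp).topologicalClosure := by
        have : c • h₀ + hp ∈ (H₀ ⊔ Hp : Submodule ℂ H) :=
          Submodule.mem_sup.mpr ⟨c • h₀, Submodule.smul_mem _ c h₀mem, hp, hpmem, rfl⟩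
        exact (H₀ ⊔ Hp).le_topologicalClosure this
      have hpos' : (0 : ℝ) ≤ (⟪c • h₀ + hp, θ (c • h₀ + hp)⟫ : ℂ).re := by
        have := (Complex.le_def.mp (hpos _ hg)).1
        simpa using this
      have hE := hexp (c • h₀) (Submodule.smul_mem _ c h₀mem) hp
      have hnsm : ‖c • h₀‖ ^ 2 = ‖c‖ ^ 2 * b ^ 2 := by
        rw [norm_smul]; ring
      have hcn : ‖c‖ = (b ^ 2)⁻¹ * ‖ip‖ := by
        rw [hc]
        rw [norm_mul, norm_neg, norm_inv, Complex.norm_real, RCLike.norm_conj,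
          Real.norm_eq_abs, abs_of_pos hb2]
      have hinner : (⟪hp, c • h₀⟫ : ℂ) = c * ip := inner_smul_right _ _ _
      have hcip : (c * ip).re = -((b ^ 2)⁻¹ * ‖ip‖ ^ 2) := by
        have h1 : c * ip = ((-(b ^ 2)⁻¹ * ‖ip‖ ^ 2 : ℝ) : ℂ) := by
          rw [hc]
          have : (starRingEnd ℂ) ip * ip = ((‖ip‖ ^ 2 : ℝ) : ℂ) := by
            rw [mul_comm, Complex.mul_conj]
            norm_cast
            rw [Complex.normSq_eq_norm_sq]
          push_cast
          rw [mul_assoc, this]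
          push_cast
          ring
        rw [h1, Complex.ofReal_re]
        ring
      rw [hE, hnsm, hinner, hcip, hcn] at hpos'
      have h1 : ((b ^ 2)⁻¹ * ‖ip‖) ^ 2 * b ^ 2 = ‖ip‖ ^ 2 * (b ^ 2)⁻¹ := by
        field_simp
      rw [h1] at hpos'
      have h3 : ‖ip‖ ^ 2 * (b ^ 2)⁻¹ ≤ (⟪hp, θ hp⟫ : ℂ).re := by linarith
      have h4 := mul_le_mul_of_nonneg_right h3 hb2.le
      rwa [mul_assoc, inv_mul_cancel₀ (ne_of_gt hb2), mul_one] at h4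
  · -- the inequality implies positivity on the closure
    intro hcs g hg
    suffices hre : 0 ≤ (⟪g, θ g⟫ : ℂ).re by
      rw [Complex.le_def]
      exact ⟨by simpa using hre, by simp [him g]⟩
    have hset : ((H₀ ⊔ Hp : Submodule ℂ H) : Set H) ⊆ {x : H | 0 ≤ (⟪x, θ x⟫ : ℂ).re} := by
      intro x hx
      obtain ⟨a0, ha0, bp, hbp, rfl⟩ := Submodule.mem_sup.mp hx
      have hE := hexp a0 ha0 bp
      have hA : (0 : ℝ) ≤ (⟪bp, θ bp⟫ : ℂ).re := by
        have := (Complex.le_def.mp (hOS bp hbp)).1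
        simpa using this
      have hC := hcs bp hbp a0 ha0
      have habs : |(⟪bp, a0⟫ : ℂ).re| ≤ ‖(⟪bp, a0⟫ : ℂ)‖ := by
        exact Complex.abs_re_le_norm _
      show (0 : ℝ) ≤ (⟪a0 + bp, θ (a0 + bp)⟫ : ℂ).re
      rw [hE]
      nlinarith [hA, hC, habs, neg_abs_le ((⟪bp, a0⟫ : ℂ).re),
        norm_nonneg ((⟪bp, a0⟫ : ℂ)), norm_nonneg a0,
        sq_nonneg ((⟪bp, θ bp⟫ : ℂ).re - ‖a0‖ ^ 2),
        sq_nonneg ((⟪bp, θ bp⟫ : ℂ).re + ‖a0‖ ^ 2 - 2 * ‖(⟪bp, a0⟫ : ℂ)‖)]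
    have hclosed : IsClosed {x : H | 0 ≤ (⟪x, θ x⟫ : ℂ).re} :=
      isClosed_le continuous_const
        (Complex.continuous_re.comp (continuous_id.inner θ.continuous))
    have hg' : g ∈ closure ((H₀ ⊔ Hp : Submodule ℂ H) : Set H) := hg
    exact closure_minimal hset hclosed hg'
end

section
/- Let θ be a reflection on a complex Hilbert space ℋ, and let ℋ₀, ℋ₊ be closed subspaces with θh₀ = h₀ for all h₀ ∈ ℋ₀ and ⟨h₊, θh₊⟩ ≥ 0 for all h₊ ∈ ℋ₊ (O.S. positivity). Let 𝒦 be a complex Hilbert space and q : ℋ₊ → 𝒦 a bounded linear operator with dense range satisfying ⟨q(a), q(b)⟩_𝒦 = ⟨a, θb⟩ for all a, b ∈ ℋ₊. Then the following are equivalent: (1) |⟨h₊, h₀⟩|² ≤ ⟨h₊, θh₊⟩ · ‖h₀‖² for all h₀ ∈ ℋ₀ and h₊ ∈ ℋ₊; (2) there exists a bounded linear operator l : ℋ₀ → 𝒦 with ‖l(h₀)‖_𝒦 ≤ ‖h₀‖ for all h₀ ∈ ℋ₀ and ⟨h₀, h₊⟩ = ⟨l(h₀), q(h₊)⟩_𝒦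 for all h₀ ∈ ℋ₀, h₊ ∈ ℋ₊ (ℋ₀ is contractively contained in 𝒦). -/
open scoped ComplexInnerProductSpace ComplexOrder
set_option maxHeartbeats 1000000

open scoped ComplexInnerProductSpace ComplexOrder

lemma extend_aux {E F G : Type*} [NormedAddCommGroup E] [NormedSpace ℂ E]
    [NormedAddCommGroup F] [NormedSpace ℂ F]
    [NormedAddCommGroup G] [NormedSpace ℂ G] [CompleteSpace G]
    (q : E →L[ℂ] F) (hq : DenseRange q) (g : E →ₗ[ℂ] G)
    (hb : ∀ c : E, ‖g c‖ ≤ ‖q c‖) :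
    ∃ T : F →L[ℂ] G, (∀ c : E, T (q c) = g c) ∧ ∀ x : F, ‖T x‖ ≤ ‖x‖ := by
  -- difference bound
  have hdiff : ∀ a b : E, ‖g a - g b‖ ≤ ‖q a - q b‖ := by
    intro a b
    have := hb (a - b)
    simpa [map_sub] using this
  set S : Set F := Set.range q with hS
  have hSdense : Dense S := hq
  have h_e : IsUniformInducing ((↑) : S → F) :=
    isUniformEmbedding_subtype_val.isUniformInducing
  have h_dense : DenseRange ((↑) : S → F) := hSdense.denseRange_val
  set f₀ : S → G := fun x => g x.2.choose with hf₀
  have hf₀val : ∀ x : S, q x.2.choose = (x : F) := fun x => x.2.choose_spec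
  have h_f : UniformContinuous f₀ := by
    have hlip : LipschitzWith 1 f₀ := by
      apply LipschitzWith.of_dist_le_mul
      intro x y
      rw [NNReal.coe_one, one_mul, dist_eq_norm, Subtype.dist_eq, dist_eq_norm]
      calc ‖g x.2.choose - g y.2.choose‖ ≤ ‖q x.2.choose - q y.2.choose‖ := hdiff _ _
        _ = ‖(x : F) - (y : F)‖ := by rw [hf₀val, hf₀val]
    exact hlip.uniformContinuous
  set T' : F → G := (h_e.isDenseInducing h_dense).extend f₀ with hT'
  have hcont : Continuous T' :=
    (uniformContinuous_uniformly_extend h_e h_dense h_f).continuous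
  have heq : ∀ c : E, T' (q c) = g c := by
    intro c
    have hmem : q c ∈ S := ⟨c, rfl⟩
    have h1 : T' ((⟨q c, hmem⟩ : S) : F) = f₀ ⟨q c, hmem⟩ :=
      uniformly_extend_of_ind h_e h_dense h_f ⟨q c, hmem⟩
    have h2 : g (hmem.choose) = g c := by
      have h3 : q (hmem.choose) = q c := hmem.choose_spec
      have : ‖g (hmem.choose) - g c‖ ≤ ‖q (hmem.choose) - q c‖ := hdiff _ _
      rw [h3, sub_self, norm_zero] at this
      have := le_antisymm this (norm_nonneg _)
      rwa [norm_eq_zero, sub_eq_zero] at this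
    simpa [hf₀] using h1.trans h2
  have hadd : ∀ x y : F, T' (x + y) = T' x + T' y := by
    have hclosed : IsClosed {p : F × F | T' (p.1 + p.2) = T' p.1 + T' p.2} :=
      isClosed_eq (hcont.comp continuous_add)
        ((hcont.comp continuous_fst).add (hcont.comp continuous_snd))
    have hsub : (S ×ˢ S : Set (F × F)) ⊆ {p : F × F | T' (p.1 + p.2) = T' p.1 + T' p.2} := by
      rintro ⟨x, y⟩ ⟨hx, hy⟩
      obtain ⟨a, rfl⟩ := hx
      obtain ⟨b, rfl⟩ := hy
      show T' (q a + q b) = T' (q a) + T' (q b)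
      have h1 : q a + q b = q (a + b) := (map_add q a b).symm
      rw [h1, heq, heq, heq, map_add]
    have hdense2 : Dense (S ×ˢ S : Set (F × F)) := hSdense.prod hSdense
    intro x y
    have := hclosed.closure_subset_iff.2 hsub
    exact this (hdense2 (x, y))
  have hsmul : ∀ (c : ℂ) (x : F), T' (c • x) = c • T' x := by
    intro c
    have hclosed : IsClosed {x : F | T' (c • x) = c • T' x} :=
      isClosed_eq (hcont.comp (continuous_const_smul c)) ((hcont).const_smul c)
    have hsub : S ⊆ {x : F | T' (c • x) = c • T' x} := by
      rintro x ⟨a, rfl⟩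
      show T' (c • q a) = c • T' (q a)
      rw [← map_smul, heq, heq, map_smul]
    intro x
    exact hclosed.closure_subset_iff.2 hsub (hSdense x)
  have hbound : ∀ x : F, ‖T' x‖ ≤ ‖x‖ := by
    have hclosed : IsClosed {x : F | ‖T' x‖ ≤ ‖x‖} :=
      isClosed_le (hcont.norm) continuous_norm
    have hsub : S ⊆ {x : F | ‖T' x‖ ≤ ‖x‖} := by
      rintro x ⟨a, rfl⟩
      show ‖T' (q a)‖ ≤ ‖q a‖
      rw [heq]; exact hb a
    intro x
    exact hclosed.closure_subset_iff.2 hsub (hSdense x)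
  refine ⟨LinearMap.mkContinuous ⟨⟨T', hadd⟩, hsmul⟩ 1 (fun x => by simpa using hbound x),
    ?_, ?_⟩
  · intro c; exact heq c
  · intro x; simpa using hbound x


/-- Let `θ` be a reflection, `H₀, Hp` closed subspaces with `θ = id` on
`H₀` and O.S. positivity on `Hp`, and let `q : Hp → 𝒦` realize the θ-renormalized
completion (`q` bounded with dense range, `⟪q a, q b⟫_𝒦 = ⟪a, θ b⟫`).  Then
`|⟪h₊, h₀⟫|² ≤ ⟪h₊, θ h₊⟫ ‖h₀‖²` for all `h₀ ∈ H₀, h₊ ∈ Hp` iff there is a contractive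
`l : H₀ → 𝒦` with `⟪h₀, h₊⟫ = ⟪l h₀, q h₊⟫_𝒦`. -/
theorem stmt14 {H 𝒦 : Type*}
    [NormedAddCommGroup H] [InnerProductSpace ℂ H] [CompleteSpace H]
    [NormedAddCommGroup 𝒦] [InnerProductSpace ℂ 𝒦] [CompleteSpace 𝒦]
    (θ : H →L[ℂ] H) (hθ_sa : IsSelfAdjoint θ) (hθ_invol : θ ∘L θ = 1)
    (H₀ Hp : Submodule ℂ H)
    (hH₀_closed : IsClosed (H₀ : Set H)) (hHp_closed : IsClosed (Hp : Set H))
    (hfix : ∀ h ∈ H₀, θ h = h)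
    (hOS : ∀ h ∈ Hp, (0 : ℂ) ≤ ⟪h, θ h⟫)
    (q : Hp →L[ℂ] 𝒦) (hq_dense : DenseRange q)
    (hq : ∀ a b : Hp, (⟪q a, q b⟫ : ℂ) = ⟪(a : H), θ b⟫) :
    (∀ h₀ ∈ H₀, ∀ hp ∈ Hp,
        ‖(⟪hp, h₀⟫ : ℂ)‖ ^ 2 ≤ (⟪hp, θ hp⟫ : ℂ).re * ‖h₀‖ ^ 2) ↔
      ∃ l : H₀ →L[ℂ] 𝒦, (∀ h₀ : H₀, ‖l h₀‖ ≤ ‖(h₀ : H)‖) ∧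
        ∀ (h₀ : H₀) (hp : Hp), (⟪(h₀ : H), (hp : H)⟫ : ℂ) = ⟪l h₀, q hp⟫ := by
  haveI : CompleteSpace H₀ := hH₀_closed.completeSpace_coe
  haveI : CompleteSpace Hp := hHp_closed.completeSpace_coe
  have hqnorm : ∀ c : Hp, ‖q c‖ ^ 2 = (⟪(c : H), θ c⟫ : ℂ).re := by
    intro c
    rw [← hq c c]
    rw [← inner_self_eq_norm_sq (𝕜 := ℂ) (q c)]
    rfl
  constructor
  · intro h1
    set P := H₀.orthogonalProjectionOnto with hP
    -- key bound : ‖P c‖ ≤ ‖q c‖ for c ∈ Hp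
    have hPb : ∀ c : Hp, ‖(P (c : H) : H)‖ ≤ ‖q c‖ := by
      intro c
      set w : H := (P (c : H) : H) with hw
      have hwmem : w ∈ H₀ := (P (c : H)).2
      have hinner : (⟪(c : H), w⟫ : ℂ) = (‖w‖ : ℂ) ^ 2 := by
        have horth : (c : H) - w ∈ H₀ᗮ := H₀.sub_starProjection_mem_orthogonal (c : H)
        have h0 : (⟪(c : H) - w, w⟫ : ℂ) = 0 :=
          Submodule.inner_left_of_mem_orthogonal hwmem horth
        have : (⟪(c : H), w⟫ : ℂ) = ⟪w, w⟫ := by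
          have := inner_sub_left (𝕜 := ℂ) (c : H) w w
          rw [h0] at this
          linear_combination -this
        rw [this, inner_self_eq_norm_sq_to_K]
        norm_cast
      have hkey := h1 w hwmem (c : H) c.2
      rw [hinner] at hkey
      have hnorm : ‖((‖w‖ : ℂ)) ^ 2‖ = ‖w‖ ^ 2 := by
        simp [sq_abs, abs_of_nonneg (norm_nonneg w)]
      rw [hnorm] at hkey
      -- hkey : (‖w‖^2)^2 ≤ re⟪c, θc⟫ * ‖w‖^2
      rw [← hqnorm c] at hkey
      by_cases hw0 : ‖w‖ = 0
      · rw [hw0]; exact norm_nonneg _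
      · have hwpos : 0 < ‖w‖ ^ 2 := by positivity
        have h7 : ‖w‖ ^ 2 * ‖w‖ ^ 2 ≤ ‖q c‖ ^ 2 * ‖w‖ ^ 2 := by nlinarith [hkey]
        have h8 : ‖w‖ ^ 2 ≤ ‖q c‖ ^ 2 := le_of_mul_le_mul_right h7 hwpos
        exact le_of_pow_le_pow_left₀ two_ne_zero (norm_nonneg _) h8
    -- build linear map g : Hp →ₗ H,  c ↦ ↑(P ↑c)
    set g : Hp →ₗ[ℂ] H :=
      H₀.subtype.comp ((P : H →ₗ[ℂ] H₀).comp Hp.subtype) with hg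
    have hgval : ∀ c : Hp, g c = (P (c : H) : H) := fun c => rfl
    obtain ⟨T, hT1, hT2⟩ := extend_aux q hq_dense g (fun c => by rw [hgval]; exact hPb c)
    have hTnorm : ‖T‖ ≤ 1 := by
      apply ContinuousLinearMap.opNorm_le_bound _ zero_le_one
      intro x; rw [one_mul]; exact hT2 x
    set l : H₀ →L[ℂ] 𝒦 := (ContinuousLinearMap.adjoint T).comp H₀.subtypeL with hl
    refine ⟨l, ?_, ?_⟩
    · intro h₀
      calc ‖l h₀‖ ≤ ‖ContinuousLinearMap.adjoint T‖ * ‖(h₀ : H)‖ :=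
            (ContinuousLinearMap.adjoint T).le_opNorm _
        _ ≤ 1 * ‖(h₀ : H)‖ := by
            apply mul_le_mul_of_nonneg_right _ (norm_nonneg _)
            rw [ContinuousLinearMap.adjoint.norm_map]; exact hTnorm
        _ = ‖(h₀ : H)‖ := one_mul _
    · intro h₀ hp
      have hadj : (⟪l h₀, q hp⟫ : ℂ) = ⟪(h₀ : H), T (q hp)⟫ :=
        ContinuousLinearMap.adjoint_inner_left T (q hp) (h₀ : H)
      rw [hadj, hT1, hgval]
      have horth : (hp : H) - (P (hp : H) : H) ∈ H₀ᗮ :=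
        H₀.sub_starProjection_mem_orthogonal (hp : H)
      have h0 : (⟪(h₀ : H), (hp : H) - (P (hp : H) : H)⟫ : ℂ) = 0 :=
        Submodule.inner_right_of_mem_orthogonal h₀.2 horth
      have := inner_sub_right (𝕜 := ℂ) (h₀ : H) (hp : H) (P (hp : H) : H)
      rw [h0] at this
      linear_combination -this
  · rintro ⟨l, hl1, hl2⟩
    intro h₀ hh₀ hp hhp
    have h2 := hl2 ⟨h₀, hh₀⟩ ⟨hp, hhp⟩
    have h3 : ‖(⟪hp, h₀⟫ : ℂ)‖ = ‖(⟪h₀, hp⟫ : ℂ)‖ := norm_inner_symm hp h₀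
    have h4 : ‖(⟪h₀, hp⟫ : ℂ)‖ ≤ ‖h₀‖ * ‖q ⟨hp, hhp⟩‖ := by
      rw [h2]
      calc ‖(⟪l ⟨h₀, hh₀⟩, q ⟨hp, hhp⟩⟫ : ℂ)‖ ≤ ‖l ⟨h₀, hh₀⟩‖ * ‖q ⟨hp, hhp⟩‖ :=
            norm_inner_le_norm _ _
        _ ≤ ‖h₀‖ * ‖q ⟨hp, hhp⟩‖ :=
            mul_le_mul_of_nonneg_right (hl1 ⟨h₀, hh₀⟩) (norm_nonneg _)
    have h5 := hqnorm ⟨hp, hhp⟩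
    have h6 : ‖(⟪hp, h₀⟫ : ℂ)‖ ^ 2 ≤ (‖h₀‖ * ‖q ⟨hp, hhp⟩‖) ^ 2 := by
      rw [h3]
      exact pow_le_pow_left₀ (norm_nonneg _) h4 2
    calc ‖(⟪hp, h₀⟫ : ℂ)‖ ^ 2 ≤ (‖h₀‖ * ‖q ⟨hp, hhp⟩‖) ^ 2 := h6
      _ = ‖q ⟨hp, hhp⟩‖ ^ 2 * ‖h₀‖ ^ 2 := by ring
      _ = (⟪hp, θ hp⟫ : ℂ).re * ‖h₀‖ ^ 2 := by rw [h5]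
end

section
/- Let θ be a reflection on a complex Hilbert space ℋ and let ℋ₀, ℋ₊, ℋ₋ be closed subspaces with θh₀ = h₀ for all h₀ ∈ ℋ₀, θ(ℋ₊) ⊆ ℋ₋, and θ(ℋ₋) ⊆ ℋ₊; let E₀, E₊, E₋ be the corresponding orthogonal projections, and let E₊^ex and E₋^ex be the orthogonal projections onto ℋ₊^ex := closure(ℋ₀ + ℋ₊) and ℋ₋^ex := closure(ℋ₀ + ℋ₋) respectively. If the Markov property E₊E₀E₋ = E₊E₋ holds, then E₊^ex E₀ = E₊^ex E₋^ex. -/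
open scoped ComplexInnerProductSpace ComplexOrder

/-- The orthogonal projection of `H` onto `M`, as an operator `H →L[ℂ] H`. -/
noncomputable def orthProj {H : Type*} [NormedAddCommGroup H] [InnerProductSpace ℂ H]
    (M : Submodule ℂ H) [M.HasOrthogonalProjection] : H →L[ℂ] H :=
  M.subtypeL ∘L M.orthogonalProjectionOnto

lemma orthProj_apply_mem {H : Type*} [NormedAddCommGroup H] [InnerProductSpace ℂ H]
    (M : Submodule ℂ H) [M.HasOrthogonalProjection] {x : H} (hx : x ∈ M) :
    orthProj M x = x := by
  exact (Submodule.starProjection_eq_self_iff (K := M)).2 hx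

lemma orthProj_inner {H : Type*} [NormedAddCommGroup H] [InnerProductSpace ℂ H]
    (M : Submodule ℂ H) [M.HasOrthogonalProjection] (u v : H) :
    ⟪orthProj M u, v⟫ = ⟪u, orthProj M v⟫ := by
  exact M.inner_starProjection_left_eq_right u v

lemma orthProj_zero_of_mem_orthogonal {H : Type*} [NormedAddCommGroup H]
    [InnerProductSpace ℂ H] (M : Submodule ℂ H) [M.HasOrthogonalProjection] {x : H}
    (hx : x ∈ Mᗮ) : orthProj M x = 0 := by
  simp [orthProj, Submodule.orthogonalProjectionOnto_apply_of_mem_orthogonal hx]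

/-- Let `θ` be a reflection, `H₀, Hp, Hm` closed subspaces with `θ = id`
on `H₀`, `θ(Hp) ⊆ Hm`, `θ(Hm) ⊆ Hp`, with projections `E₀, E₊, E₋`, and let `E₊^ex, E₋^ex`
be the projections onto `closure (H₀ + Hp)` and `closure (H₀ + Hm)`.  If the Markov
property `E₊E₀E₋ = E₊E₋` holds, then `E₊^ex E₀ = E₊^ex E₋^ex`. -/
theorem stmt15 {H : Type*} [NormedAddCommGroup H] [InnerProductSpace ℂ H] [CompleteSpace H]
    (θ : H →L[ℂ] H) (hθ_sa : IsSelfAdjoint θ) (hθ_invol : θ ∘L θ = 1)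
    (H₀ Hp Hm : Submodule ℂ H)
    [CompleteSpace H₀] [CompleteSpace Hp] [CompleteSpace Hm]
    (hfix : ∀ h ∈ H₀, θ h = h)
    (hpm : ∀ h ∈ Hp, θ h ∈ Hm) (hmp : ∀ h ∈ Hm, θ h ∈ Hp)
    (hMarkov : orthProj Hp ∘L orthProj H₀ ∘L orthProj Hm = orthProj Hp ∘L orthProj Hm) :
    orthProj ((H₀ ⊔ Hp).topologicalClosure) ∘L orthProj H₀ =
      orthProj ((H₀ ⊔ Hp).topologicalClosure) ∘L
        orthProj ((H₀ ⊔ Hm).topologicalClosure) := by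
  set P := orthProj ((H₀ ⊔ Hp).topologicalClosure) with hP
  set Q := orthProj ((H₀ ⊔ Hm).topologicalClosure) with hQ
  set E0 := orthProj H₀ with hE0
  set Ep := orthProj Hp with hEp
  set Em := orthProj Hm with hEm
  -- E0 ∘ Q = E0
  have hQE0 : ∀ x : H, Q (E0 x) = E0 x := fun x => by
    apply orthProj_apply_mem
    exact Submodule.le_topologicalClosure _ (Submodule.mem_sup_left
      ((H₀.orthogonalProjectionOnto x).2))
  have hE0Q : ∀ x : H, E0 (Q x) = E0 x := by
    intro x
    have hsub : Q x - x ∈ H₀ᗮ := by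
      apply Submodule.orthogonal_le
        (le_trans le_sup_left (Submodule.le_topologicalClosure (H₀ ⊔ Hm)))
      have := Submodule.sub_starProjection_mem_orthogonal (K := (H₀ ⊔ Hm).topologicalClosure) x
      simpa [hQ, orthProj] using (neg_mem this : -(x - Q x) ∈ _)
    have h0 : E0 (Q x - x) = 0 := orthProj_zero_of_mem_orthogonal H₀ hsub
    rw [map_sub, sub_eq_zero] at h0
    exact h0
  -- Ep (E0 y) = Ep y for y in closure (H₀ ⊔ Hm)
  have hkey : ∀ y ∈ (H₀ ⊔ Hm).topologicalClosure, Ep (E0 y) = Ep y := by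
    intro y hy
    have hker : (H₀ ⊔ Hm).topologicalClosure ≤
        LinearMap.ker ((Ep ∘L E0 - Ep : H →L[ℂ] H) : H →ₗ[ℂ] H) := by
      apply Submodule.topologicalClosure_minimal
      · apply sup_le
        · intro a ha
          simp only [LinearMap.mem_ker, ContinuousLinearMap.coe_coe, ContinuousLinearMap.coe_sub',
            Pi.sub_apply, ContinuousLinearMap.coe_comp', Function.comp_apply]
          rw [orthProj_apply_mem H₀ ha, sub_self]
        · intro m hm
          simp only [LinearMap.mem_ker, ContinuousLinearMap.coe_coe, ContinuousLinearMap.coe_sub',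
            Pi.sub_apply, ContinuousLinearMap.coe_comp', Function.comp_apply]
          have h1 : Ep (E0 (Em m)) = Ep (Em m) :=
            congrFun (congrArg DFunLike.coe hMarkov) m
          rw [orthProj_apply_mem Hm hm] at h1
          rw [h1, sub_self]
      · exact ContinuousLinearMap.isClosed_ker (Ep ∘L E0 - Ep : H →L[ℂ] H)
    have := hker hy
    simp only [LinearMap.mem_ker, ContinuousLinearMap.coe_coe, ContinuousLinearMap.coe_sub', Pi.sub_apply,
      ContinuousLinearMap.coe_comp', Function.comp_apply] at this
    exact sub_eq_zero.mp this
  -- main step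
  ext x
  simp only [ContinuousLinearMap.coe_comp', Function.comp_apply]
  have hmem : E0 x - Q x ∈ ((H₀ ⊔ Hp).topologicalClosure)ᗮ := by
    rw [← Submodule.orthogonal_orthogonal_eq_closure, Submodule.triorthogonal_eq_orthogonal]
    intro u hu
    obtain ⟨a, ha, b, hb, rfl⟩ := Submodule.mem_sup.mp hu
    have hA : ⟪a, E0 x - Q x⟫ = 0 := by
      rw [inner_sub_right]
      have h1 : ⟪a, E0 x⟫ = ⟪a, x⟫ := by
        rw [← orthProj_inner H₀, orthProj_apply_mem H₀ ha]
      have h2 : ⟪a, Q x⟫ = ⟪a, x⟫ := by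
        rw [← orthProj_inner, orthProj_apply_mem _
          (Submodule.le_topologicalClosure _ (Submodule.mem_sup_left ha))]
      rw [h1, h2, sub_self]
    have hB : ⟪b, E0 x - Q x⟫ = 0 := by
      have hE0x : E0 x = E0 (Q x) := (hE0Q x).symm
      rw [inner_sub_right, hE0x]
      have hy : Q x ∈ (H₀ ⊔ Hm).topologicalClosure := ((H₀ ⊔ Hm).topologicalClosure.orthogonalProjectionOnto x).2
      have h1 : ⟪b, E0 (Q x)⟫ = ⟪b, Q x⟫ := by
        calc ⟪b, E0 (Q x)⟫ = ⟪Ep b, E0 (Q x)⟫ := by rw [orthProj_apply_mem Hp hb]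
          _ = ⟪b, Ep (E0 (Q x))⟫ := orthProj_inner Hp b _
          _ = ⟪b, Ep (Q x)⟫ := by rw [hkey _ hy]
          _ = ⟪Ep b, Q x⟫ := (orthProj_inner Hp b _).symm
          _ = ⟪b, Q x⟫ := by rw [orthProj_apply_mem Hp hb]
      rw [h1, sub_self]
    rw [inner_add_left, hA, hB, add_zero]
  have hPzero : P (E0 x - Q x) = 0 :=
    orthProj_zero_of_mem_orthogonal _ hmem
  have h2 : P (E0 x) - P (Q x) = 0 := by rw [← map_sub]; exact hPzero
  exact sub_eq_zero.mp h2
end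

section
/- Let ℋ be a complex Hilbert space, let E₀, E₊, E₋ be orthogonal projections on ℋ, and let θ be a reflection on ℋ satisfying θE₀ = E₀, θE₊ = E₋θE₊, and θE₋ = E₊θE₋ (i.e., θ fixes the range of E₀, maps the range of E₊ into the range of E₋, and maps the range of E₋ into the range of E₊). If the Markov property E₊E₀E₋ = E₊E₋ holds, then O.S. positivity holds: E₊θE₊ ≥ 0, i.e. ⟨h₊, θh₊⟩ ≥ 0 for every h₊ in the range of E₊. -/
open scoped ComplexInnerProductSpace ComplexOrder

private lemma sa_inner {H : Type*} [NormedAddCommGroup H] [InnerProductSpace ℂ H]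
    [CompleteSpace H] {T : H →L[ℂ] H} (hT : IsSelfAdjoint T) (x y : H) :
    ⟪T x, y⟫ = ⟪x, T y⟫ := by
  rw [ContinuousLinearMap.isSelfAdjoint_iff'] at hT
  conv_lhs => rw [← hT]
  exact ContinuousLinearMap.adjoint_inner_left T y x

/-- Let `E₀, E₊, E₋` be orthogonal projections and `θ` a reflection with
`θE₀ = E₀`, `θE₊ = E₋θE₊`, `θE₋ = E₊θE₋`.  If the Markov property `E₊E₀E₋ = E₊E₋` holds,
then O.S. positivity holds: `E₊θE₊ ≥ 0`. -/
theorem stmt16 {H : Type*} [NormedAddCommGroup H] [InnerProductSpace ℂ H] [CompleteSpace H]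
    (θ E₀ Ep Em : H →L[ℂ] H)
    (hθ_sa : IsSelfAdjoint θ) (hθ_invol : θ ∘L θ = 1)
    (hE₀_sa : IsSelfAdjoint E₀) (hE₀_idem : E₀ ∘L E₀ = E₀)
    (hEp_sa : IsSelfAdjoint Ep) (hEp_idem : Ep ∘L Ep = Ep)
    (hEm_sa : IsSelfAdjoint Em) (hEm_idem : Em ∘L Em = Em)
    (h₀ : θ ∘L E₀ = E₀)
    (hp : θ ∘L Ep = Em ∘L θ ∘L Ep)
    (hm : θ ∘L Em = Ep ∘L θ ∘L Em)
    (hMarkov : Ep ∘L E₀ ∘L Em = Ep ∘L Em) :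
    ∀ h : H, (0 : ℂ) ≤ ⟪h, (Ep ∘L θ ∘L Ep) h⟫ := by
  intro h
  set u := Ep h with hu
  -- E₀ ∘L θ = E₀
  have hE₀θ : ∀ x : H, E₀ (θ x) = E₀ x := by
    intro x
    have h1 : ∀ y : H, ⟪y, E₀ (θ x)⟫ = ⟪y, E₀ x⟫ := by
      intro y
      rw [← sa_inner hE₀_sa y (θ x), ← sa_inner hθ_sa (E₀ y) x]
      have : θ (E₀ y) = E₀ y := by
        have := congrArg (fun T : H →L[ℂ] H => T y) h₀
        simpa using this
      rw [this, sa_inner hE₀_sa y x]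
    exact ext_inner_left ℂ h1
  have hEpu : Ep u = u := by
    have := congrArg (fun T : H →L[ℂ] H => T h) hEp_idem
    simpa using this
  have hθu : Em (θ u) = θ u := by
    have := congrArg (fun T : H →L[ℂ] H => T h) hp
    simpa [hu] using this.symm
  have key : ⟪h, (Ep ∘L θ ∘L Ep) h⟫ = ⟪E₀ u, E₀ u⟫ := by
    have hMark : ∀ x : H, Ep (E₀ (Em x)) = Ep (Em x) := by
      intro x
      have := congrArg (fun T : H →L[ℂ] H => T x) hMarkov
      simpa using this
    calc ⟪h, (Ep ∘L θ ∘L Ep) h⟫ = ⟪h, Ep (θ u)⟫ := rfl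
      _ = ⟪u, θ u⟫ := by rw [← sa_inner hEp_sa h (θ u)]
      _ = ⟪u, Em (θ u)⟫ := by rw [hθu]
      _ = ⟪h, Ep (Em (θ u))⟫ := by rw [← sa_inner hEp_sa h (Em (θ u))]
      _ = ⟪h, Ep (E₀ (Em (θ u)))⟫ := by rw [hMark]
      _ = ⟪h, Ep (E₀ (θ u))⟫ := by rw [hθu]
      _ = ⟪u, E₀ (θ u)⟫ := by rw [← sa_inner hEp_sa h (E₀ (θ u))]
      _ = ⟪u, E₀ u⟫ := by rw [hE₀θ]
      _ = ⟪u, E₀ (E₀ u)⟫ := by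
          have := congrArg (fun T : H →L[ℂ] H => T u) hE₀_idem
          rw [show E₀ (E₀ u) = E₀ u from by simpa using this]
      _ = ⟪E₀ u, E₀ u⟫ := (sa_inner hE₀_sa u (E₀ u)).symm
  rw [key, @inner_self_eq_norm_sq_to_K ℂ]
  norm_cast
  positivity
end

section
/- Let ℋ₁ and ℋ₂ be complex Hilbert spaces and let ℋ = ℋ₁ ⊕ ℋ₂ be their Hilbert-space direct sum (‖(x,y)‖² = ‖x‖² + ‖y‖²). Let C : ℋ₁ → ℋ₂ be a bounded linear contraction, and let E₊, E₋, E₀ be the orthogonal projections of ℋ onto the closed subspaces Graph(C) = {(x, Cx) : x ∈ ℋ₁}, Graph(−C) = {(x, −Cx) : x ∈ ℋ₁}, and ℋ₁ ⊕ {0} respectively. Then the Markov property E₊E₀E₋ = E₊E₋ holds if and only if C = 0. -/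
open scoped ComplexInnerProductSpace ComplexOrder

/-- Two self-adjoint idempotent operators with the same range are equal. -/
lemma proj_ext_aux {H : Type*} [NormedAddCommGroup H] [InnerProductSpace ℂ H]
    [CompleteSpace H] (P Q : H →L[ℂ] H)
    (hP : IsSelfAdjoint P) (hPi : P ∘L P = P)
    (hQ : IsSelfAdjoint Q) (hQi : Q ∘L Q = Q)
    (h : LinearMap.range (P : H →ₗ[ℂ] H) = LinearMap.range (Q : H →ₗ[ℂ] H)) : P = Q := by
  have fixP : ∀ v ∈ LinearMap.range (P : H →ₗ[ℂ] H), P v = v := by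
    rintro v ⟨w, rfl⟩
    simpa using ContinuousLinearMap.ext_iff.mp hPi w
  have fixQ : ∀ v ∈ LinearMap.range (Q : H →ₗ[ℂ] H), Q v = v := by
    rintro v ⟨w, rfl⟩
    simpa using ContinuousLinearMap.ext_iff.mp hQi w
  have hPQ : P ∘L Q = Q := by
    ext v
    exact fixP (Q v) (h ▸ ⟨v, rfl⟩)
  have hQP : Q ∘L P = P := by
    ext v
    exact fixQ (P v) (h.symm ▸ ⟨v, rfl⟩)
  have hmul : P * Q = Q := hPQ
  have hmul' : Q * P = P := hQP
  calc P = star P := hP.symm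
    _ = star (Q * P) := by rw [hmul']
    _ = star P * star Q := by rw [star_mul]
    _ = P * Q := by rw [hP.star_eq, hQ.star_eq]
    _ = Q := hmul

/-- Let `H = H₁ ⊕ H₂` (ℓ²-direct sum), `C : H₁ → H₂` a bounded
contraction, and let `E₊, E₋, E₀` be the orthogonal projections onto `Graph(C)`,
`Graph(-C)` and `H₁ ⊕ 0`.  Then the Markov property `E₊E₀E₋ = E₊E₋` holds iff `C = 0`. -/
theorem stmt18 {H₁ H₂ : Type*}
    [NormedAddCommGroup H₁] [InnerProductSpace ℂ H₁] [CompleteSpace H₁]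
    [NormedAddCommGroup H₂] [InnerProductSpace ℂ H₂] [CompleteSpace H₂]
    (C : H₁ →L[ℂ] H₂) (hC : ∀ x : H₁, ‖C x‖ ≤ ‖x‖)
    (Ep Em E₀ : WithLp 2 (H₁ × H₂) →L[ℂ] WithLp 2 (H₁ × H₂))
    (hEp_sa : IsSelfAdjoint Ep) (hEp_idem : Ep ∘L Ep = Ep)
    (hEp_range : ∀ p : WithLp 2 (H₁ × H₂), p ∈ LinearMap.range (Ep : WithLp 2 (H₁ × H₂) →ₗ[ℂ] WithLp 2 (H₁ × H₂)) ↔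
      (WithLp.equiv 2 (H₁ × H₂) p).2 = C (WithLp.equiv 2 (H₁ × H₂) p).1)
    (hEm_sa : IsSelfAdjoint Em) (hEm_idem : Em ∘L Em = Em)
    (hEm_range : ∀ p : WithLp 2 (H₁ × H₂), p ∈ LinearMap.range (Em : WithLp 2 (H₁ × H₂) →ₗ[ℂ] WithLp 2 (H₁ × H₂)) ↔
      (WithLp.equiv 2 (H₁ × H₂) p).2 = - C (WithLp.equiv 2 (H₁ × H₂) p).1)
    (hE₀_sa : IsSelfAdjoint E₀) (hE₀_idem : E₀ ∘L E₀ = E₀)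
    (hE₀_range : ∀ p : WithLp 2 (H₁ × H₂), p ∈ LinearMap.range (E₀ : WithLp 2 (H₁ × H₂) →ₗ[ℂ] WithLp 2 (H₁ × H₂)) ↔
      (WithLp.equiv 2 (H₁ × H₂) p).2 = 0) :
    Ep ∘L E₀ ∘L Em = Ep ∘L Em ↔ C = 0 := by
  set e := WithLp.equiv 2 (H₁ × H₂) with he
  have fixEp : ∀ v ∈ LinearMap.range (Ep : WithLp 2 (H₁ × H₂) →ₗ[ℂ] WithLp 2 (H₁ × H₂)), Ep v = v := by
    rintro v ⟨w, rfl⟩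
    simpa using ContinuousLinearMap.ext_iff.mp hEp_idem w
  have fixEm : ∀ v ∈ LinearMap.range (Em : WithLp 2 (H₁ × H₂) →ₗ[ℂ] WithLp 2 (H₁ × H₂)), Em v = v := by
    rintro v ⟨w, rfl⟩
    simpa using ContinuousLinearMap.ext_iff.mp hEm_idem w
  have fixE₀ : ∀ v ∈ LinearMap.range (E₀ : WithLp 2 (H₁ × H₂) →ₗ[ℂ] WithLp 2 (H₁ × H₂)), E₀ v = v := by
    rintro v ⟨w, rfl⟩
    simpa using ContinuousLinearMap.ext_iff.mp hE₀_idem w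
  constructor
  · intro hM
    -- E₀ acts as (x, y) ↦ (x, 0)
    have symE₀ := hE₀_sa.isSymmetric
    have symEp := hEp_sa.isSymmetric
    have hE₀_eq : ∀ w : WithLp 2 (H₁ × H₂), E₀ w = e.symm ((e w).1, 0) := by
      intro w
      have hsnd : (e (E₀ w)).2 = 0 := (hE₀_range (E₀ w)).mp ⟨w, rfl⟩
      have hfst : (e (E₀ w)).1 = (e w).1 := by
        apply ext_inner_right (𝕜 := ℂ)
        intro a
        have hmem : e.symm (a, 0) ∈ LinearMap.range (E₀ : WithLp 2 (H₁ × H₂) →ₗ[ℂ] WithLp 2 (H₁ × H₂)) := by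
          rw [hE₀_range]; simp
        have := symE₀ w (e.symm (a, 0))
        simp only [ContinuousLinearMap.coe_coe] at this
        rw [fixE₀ _ hmem] at this
        have lhs : inner (𝕜 := ℂ) (E₀ w) (e.symm (a, 0)) =
            inner (𝕜 := ℂ) (e (E₀ w)).1 a := by
          simp [he, WithLp.prod_inner_apply, WithLp.equiv_symm_apply,
            WithLp.ofLp_toLp, WithLp.equiv_apply]
        have rhs : inner (𝕜 := ℂ) w (e.symm (a, 0)) =
            inner (𝕜 := ℂ) (e w).1 a := by
          simp [he, WithLp.prod_inner_apply, WithLp.equiv_symm_apply,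
            WithLp.ofLp_toLp, WithLp.equiv_apply]
        rw [lhs, rhs] at this
        exact this
      have : e (E₀ w) = ((e w).1, 0) := Prod.ext hfst hsnd
      apply e.injective
      rw [this]
      simp
    ext x
    show C x = 0
    set p : WithLp 2 (H₁ × H₂) := e.symm (x, -C x) with hp
    set q : WithLp 2 (H₁ × H₂) := e.symm (x, C x) with hq
    have hpm : Em p = p := by
      apply fixEm
      rw [hEm_range]
      simp [hp]
    have hqp : Ep q = q := by
      apply fixEp
      rw [hEp_range]
      simp [hq]
    have key := ContinuousLinearMap.ext_iff.mp hM p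
    simp only [ContinuousLinearMap.coe_comp', Function.comp_apply,
      ContinuousLinearMap.comp_apply] at key
    rw [hpm] at key
    have lhs : inner (𝕜 := ℂ) (Ep (E₀ p)) q = inner (𝕜 := ℂ) x x := by
      have hs := symEp (E₀ p) q
      simp only [ContinuousLinearMap.coe_coe] at hs
      rw [hs, hqp, hE₀_eq p]
      have hpe : (e p).1 = x := by simp [hp, he, WithLp.equiv_symm_apply]
      rw [hpe]
      simp [hq, he, WithLp.prod_inner_apply, WithLp.equiv_symm_apply,
        WithLp.ofLp_toLp]
    have rhs : inner (𝕜 := ℂ) (Ep p) q =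
        inner (𝕜 := ℂ) x x - inner (𝕜 := ℂ) (C x) (C x) := by
      have hs := symEp p q
      simp only [ContinuousLinearMap.coe_coe] at hs
      rw [hs, hqp]
      simp only [hp, hq, he, WithLp.prod_inner_apply, WithLp.equiv_symm_apply,
        WithLp.ofLp_toLp, inner_neg_left]
      ring
    rw [key, rhs] at lhs
    have : inner (𝕜 := ℂ) (C x) (C x) = 0 := by
      have := lhs
      linear_combination -this
    exact inner_self_eq_zero.mp this
  · intro hC0
    subst hC0
    have hrp : LinearMap.range (Ep : WithLp 2 (H₁ × H₂) →ₗ[ℂ] WithLp 2 (H₁ × H₂)) = LinearMap.range (E₀ : WithLp 2 (H₁ × H₂) →ₗ[ℂ] WithLp 2 (H₁ × H₂)) := by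
      ext w
      rw [hEp_range, hE₀_range]
      simp
    have hrm : LinearMap.range (Em : WithLp 2 (H₁ × H₂) →ₗ[ℂ] WithLp 2 (H₁ × H₂)) = LinearMap.range (E₀ : WithLp 2 (H₁ × H₂) →ₗ[ℂ] WithLp 2 (H₁ × H₂)) := by
      ext w
      rw [hEm_range, hE₀_range]
      simp
    have h1 : Ep = E₀ := proj_ext_aux Ep E₀ hEp_sa hEp_idem hE₀_sa hE₀_idem hrp
    have h2 : Em = E₀ := proj_ext_aux Em E₀ hEm_sa hEm_idem hE₀_sa hE₀_idem hrm
    rw [h1, h2, hE₀_idem, hE₀_idem]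
end
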